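/- arXiv:0806.3223 — 6 statements merged into one kernel-verified Lean document; each statement's English description precedes it below -/
import Mathlib

section
/- Let p₁, p₂, r₁, r₂ ≥ 2 with gcd(p₁,p₂) = 1 and gcd(r₁,r₂) = 1, and let ψ : C_{p₁} ∗ C_{p₂} → C_{r₁} ∗ C_{r₂} be a surjective group homomorphism. Then there exist a generator s₁ of the first factor C_{r₁} (i.e., an element of the image of C_{r₁} in the free product whose powers give that whole factor), a generator s₂ of the second factor C_{r₂}, and elements u₁, u₂ of C_{r₁} ∗ C_{r₂} such that either ψ(t₁) = u₁ s₁ u₁⁻¹ and ψ(t₂) = u₂ s₂ u₂⁻¹, or else ψ(t₁) = u₁ s₂ u₁⁻¹ and ψ(t₂) = u₂ s₁ u₂⁻¹. -/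
set_option linter.unusedVariables false
set_option linter.unusedSectionVars false
set_option linter.unusedTactic false


open Monoid

namespace Monoid.CoprodI

set_option linter.unusedSectionVars false

variable {ι : Type*} [DecidableEq ι] {G : ι → Type*} [∀ i, Group (G i)]
  [∀ i, DecidableEq (G i)]

theorem word_prod_injective : Function.Injective (Word.prod : Word G → CoprodI G) :=
  Word.equiv.symm.injective

theorem word_prod_eq_one_iff {w : Word G} : w.prod = 1 ↔ w = Word.empty :=
  ⟨fun h => word_prod_injective (by simpa using h), fun h => by simp [h]⟩

theorem equiv_word_prod (w : Word G) : Word.equiv w.prod = w :=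
  Word.equiv.apply_symm_apply w

theorem word_prod_equiv (g : CoprodI G) : (Word.equiv g).prod = g :=
  Word.equiv.symm_apply_apply g

theorem equiv_mul (a b : CoprodI G) : Word.equiv (a * b) = a • Word.equiv b :=
  show (a * b) • (Word.empty : Word G) = a • b • (Word.empty : Word G) from mul_smul a b _

theorem NeWord.toWord_toList {i j} (w : NeWord G i j) : w.toWord.toList = w.toList := rfl

theorem NeWord.inv_toList_length {i j} (w : NeWord G i j) :
    w.inv.toList.length = w.toList.length := by
  induction w with
  | singleton x h => rfl
  | append w₁ hne w₂ ih₁ ih₂ => simp [inv, ih₁, ih₂, add_comm]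

theorem NeWord.prod_ne_one {i j} (w : NeWord G i j) : w.prod ≠ 1 := by
  rw [NeWord.prod, Ne, word_prod_eq_one_iff]
  intro h
  have := w.toList_ne_nil
  rw [← NeWord.toWord_toList, h] at this
  simp [Word.empty] at this

theorem NeWord.prod_pow_ne_one {i j} (hij : i ≠ j) (w : NeWord G i j) {k : ℕ} (hk : k ≠ 0) :
    w.prod ^ k ≠ 1 := by
  suffices h : ∀ k : ℕ, k ≠ 0 → ∃ v : NeWord G i j, v.prod = w.prod ^ k by
    obtain ⟨v, hv⟩ := h k hk
    rw [← hv]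
    exact v.prod_ne_one
  intro k
  induction k with
  | zero => simp
  | succ n ih =>
    intro _
    rcases Nat.eq_zero_or_pos n with hn | hn
    · exact ⟨w, by simp [hn]⟩
    · obtain ⟨v, hv⟩ := ih hn.ne'
      exact ⟨v.append hij.symm w, by rw [NeWord.append_prod, hv, pow_succ]⟩

theorem rcons_length_cases {i : ι} (p : Word.Pair G i) :
    (Word.rcons p).toList.length = p.tail.toList.length ∨
      (Word.rcons p).toList.length = p.tail.toList.length + 1 := by
  rw [Word.rcons]
  split_ifs <;> simp [Word.cons]

theorem equivPair_head_eq {i : ι} {w : Word G} (h : w.fstIdx = some i) :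
    ∃ (hne : w.toList ≠ []), (Word.equivPair i w).head ≠ 1 ∧
      w.toList.length = (Word.equivPair i w).tail.toList.length + 1 := by
  have hne : w.toList ≠ [] := by
    intro hnil
    rw [Word.fstIdx, hnil] at h
    simp at h
  have hcond : ∃ (h : w.toList ≠ []), (w.toList.head h).1 = i := by
    refine ⟨hne, ?_⟩
    rw [Word.fstIdx, List.head?_eq_head hne] at h
    simpa using h
  have hhead : (Word.equivPair i w).head ≠ 1 := by
    rw [Word.equivPair_head, dif_pos hcond]
    obtain ⟨h1, h2⟩ := hcond
    subst h2
    exact w.ne_one _ (List.head_mem h1)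
  refine ⟨hne, hhead, ?_⟩
  have hw : Word.rcons (Word.equivPair i w) = w := (Word.equivPair i).symm_apply_apply w
  conv_lhs => rw [← hw]
  rw [Word.rcons, dif_neg hhead]
  simp [Word.cons]

/-- multiplying by a letter whose index matches the first index of `w` does not increase length -/
theorem smul_length_le_of_fstIdx {i : ι} (m : G i) {w : Word G} (h : w.fstIdx = some i) :
    (of m • w).toList.length ≤ w.toList.length := by
  obtain ⟨hne, hhead, hlen⟩ := equivPair_head_eq h
  rw [Word.of_smul_def]
  rcases rcons_length_cases ⟨m * (Word.equivPair i w).head, (Word.equivPair i w).tail,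
    (Word.equivPair i w).fstIdx_ne⟩ with h' | h' <;> dsimp only at h' <;> rw [h'] <;> omega

theorem length_inv (g : CoprodI G) :
    (Word.equiv g⁻¹).toList.length = (Word.equiv g).toList.length := by
  by_cases hg : g = 1
  · simp [hg]
  · have hne : Word.equiv g ≠ Word.empty := by
      intro h
      apply hg
      rw [← word_prod_equiv g, h, Word.prod_empty]
    obtain ⟨i, j, w', hw'⟩ := NeWord.of_word (Word.equiv g) hne
    have hg' : g = w'.prod := by
      rw [NeWord.prod, hw', word_prod_equiv]
    have hginv : g⁻¹ = w'.inv.prod := by rw [NeWord.inv_prod, hg']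
    rw [hginv, NeWord.prod, equiv_word_prod, ← hw']
    rw [NeWord.toWord_toList, NeWord.toWord_toList, NeWord.inv_toList_length]

set_option maxHeartbeats 1000000 in
theorem conj_of_pow_eq_one [Nonempty ι] (g₀ : CoprodI G) {k : ℕ} (hk : k ≠ 0)
    (h1 : g₀ ^ k = 1) :
    ∃ (i : ι) (x : G i) (u : CoprodI G), g₀ = u * of x * u⁻¹ := by
  suffices H : ∀ (n : ℕ) (g : CoprodI G), (Word.equiv g).toList.length ≤ n →
      g ^ k = 1 → ∃ (i : ι) (x : G i) (u : CoprodI G), g = u * of x * u⁻¹ from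
    H _ g₀ le_rfl h1
  intro n
  induction n using Nat.strong_induction_on with
  | _ n ih =>
  intro g hlen hgk
  rcases hw : (Word.equiv g).toList with _ | ⟨a, rest⟩
  · refine ⟨Classical.arbitrary ι, 1, 1, ?_⟩
    have hemp : Word.equiv g = Word.empty := Word.ext hw
    have := congrArg Word.prod hemp
    rw [word_prod_equiv] at this
    simp [this]
  · have hne : Word.equiv g ≠ Word.empty := by
      intro h; rw [h] at hw; simp at hw
    obtain ⟨i, j, w', hw'⟩ := NeWord.of_word _ hne
    have hlist : w'.toList = (Word.equiv g).toList := by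
      rw [← NeWord.toWord_toList, hw']
    have hg : g = w'.prod := by rw [NeWord.prod, hw', word_prod_equiv]
    rcases rest with _ | ⟨b, rest'⟩
    · refine ⟨a.1, a.2, 1, ?_⟩
      have hgp : g = Word.prod (Word.equiv g) := (word_prod_equiv g).symm
      rw [hgp, Word.prod, hw]
      simp
    · by_cases hij : i = j
      · subst hij
        have hfst : (Word.equiv g).fstIdx = some i := by
          rw [Word.fstIdx, ← hlist, w'.toList_head?]; rfl
        set x := (Word.equivPair i (Word.equiv g)).head with hxdef
        set tl := (Word.equivPair i (Word.equiv g)).tail with htldef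
        obtain ⟨hne', hx1, hlen'⟩ := equivPair_head_eq hfst
        have hcons : (Word.equiv g).toList = ⟨i, x⟩ :: tl.toList := by
          have hw_eq : Word.rcons (Word.equivPair i (Word.equiv g)) = Word.equiv g :=
            (Word.equivPair i).symm_apply_apply _
          rw [Word.rcons, dif_neg hx1] at hw_eq
          rw [← hw_eq]
          simp [Word.cons]
          exact ⟨rfl, rfl⟩
        have htl_smul : tl = (of x)⁻¹ • Word.equiv g :=
          Word.equivPair_tail_eq_inv_smul _
        have hprod_tl : Word.prod tl = (of x)⁻¹ * g := by
          rw [htl_smul, Word.prod_smul, word_prod_equiv]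
        have htl_len : tl.toList.length = rest'.length + 1 := by
          have := hlen'
          rw [hw] at this
          simpa using this.symm
        have htl_ne : tl ≠ Word.empty := by
          intro h; rw [h] at htl_len; simp at htl_len
        obtain ⟨kk, l, v, hv⟩ := NeWord.of_word tl htl_ne
        have hvlist : v.toList = tl.toList := by rw [← NeWord.toWord_toList, hv]
        have hlast : tl.toList.getLast? = some ⟨i, w'.last⟩ := by
          have h1' : (Word.equiv g).toList.getLast? = some ⟨i, w'.last⟩ := by
            rw [← hlist]; exact w'.toList_getLast?
          rw [hcons] at h1'
          rcases htll : tl.toList with _ | ⟨c, cs⟩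
          · rw [htll] at htl_len; simp at htl_len
          · rw [htll] at h1'
            rw [List.getLast?_cons_cons] at h1'
            exact h1'
        have hl_eq : l = i := by
          have := v.toList_getLast?
          rw [hvlist, hlast] at this
          exact (congrArg Sigma.fst (Option.some.inj this)).symm
        subst hl_eq
        have hvprod : v.prod = Word.prod tl := by rw [NeWord.prod, hv]
        set g' := (of x)⁻¹ * g * of x with hg'def
        have hg'2 : g' = v.prod * of x := by
          rw [hg'def, hvprod, hprod_tl]
        have hg'inv : g'⁻¹ = of x⁻¹ * v.inv.prod := by
          rw [hg'2]; simp [mul_inv_rev]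
        have hequiv_inv : Word.equiv g'⁻¹ = of x⁻¹ • v.inv.toWord := by
          rw [hg'inv]
          have : v.inv.prod = Word.prod v.inv.toWord := rfl
          rw [this, equiv_mul, equiv_word_prod]
        have hfst' : (v.inv.toWord).fstIdx = some l := by
          rw [Word.fstIdx, NeWord.toWord_toList, v.inv.toList_head?]; rfl
        have hb1 : (Word.equiv g'⁻¹).toList.length ≤ tl.toList.length := by
          rw [hequiv_inv]
          calc (of x⁻¹ • v.inv.toWord).toList.length ≤ v.inv.toWord.toList.length :=
                smul_length_le_of_fstIdx _ hfst'
            _ = tl.toList.length := by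
                rw [NeWord.toWord_toList, NeWord.inv_toList_length, hvlist]
        have hb2 : (Word.equiv g').toList.length ≤ tl.toList.length := by
          rw [← length_inv g']; exact hb1
        have hlt : tl.toList.length < n := by
          have h2 : (Word.equiv g).toList.length = rest'.length + 2 := by
            rw [hw]; simp
          omega
        have hg'k : g' ^ k = 1 := by
          have : g' = (of x)⁻¹ * g * ((of x)⁻¹)⁻¹ := by rw [inv_inv]
          rw [this, conj_pow, hgk]
          group
        obtain ⟨m, z, u, hu⟩ := ih tl.toList.length hlt g' hb2 hg'k
        refine ⟨m, z, of x * u, ?_⟩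
        have hgg : g = of x * g' * (of x)⁻¹ := by rw [hg'def]; group
        rw [hgg, hu]
        group
      · exfalso
        rw [hg] at hgk
        exact NeWord.prod_pow_ne_one hij w' hk hgk

end Monoid.CoprodI




section transfer

variable {M N : Type} [Group M] [Group N] [DecidableEq M] [DecidableEq N]

private def Fam (M N : Type) : Bool → Type := fun b => cond b M N

instance famGroup : ∀ b, Group (Fam M N b)
  | true => ‹Group M›
  | false => ‹Group N›

instance famDecEq : ∀ b, DecidableEq (Fam M N b)
  | true => ‹DecidableEq M›
  | false => ‹DecidableEq N›

private def toI : Coprod M N →* CoprodI (Fam M N) :=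
  Coprod.lift (CoprodI.of (M := Fam M N) (i := true)) (CoprodI.of (M := Fam M N) (i := false))

private def ofI : CoprodI (Fam M N) →* Coprod M N :=
  CoprodI.lift (fun b => Bool.rec (motive := fun b => Fam M N b →* Coprod M N)
    Coprod.inr Coprod.inl b)

theorem ofI_toI (q : Coprod M N) : ofI (toI q) = q := by
  have : (ofI (M := M) (N := N)).comp toI = MonoidHom.id _ := by
    apply Coprod.hom_ext <;> ext x <;>
      simp only [MonoidHom.comp_apply, MonoidHom.id_apply, toI, ofI, Coprod.lift_apply_inl,
        Coprod.lift_apply_inr] <;> exact CoprodI.lift_of _ _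
  exact DFunLike.congr_fun this q

theorem ofI_of_true (x : Fam M N true) : ofI (CoprodI.of x) = Coprod.inl x :=
  CoprodI.lift_of _ _

theorem ofI_of_false (x : Fam M N false) : ofI (CoprodI.of x) = Coprod.inr x :=
  CoprodI.lift_of _ _

theorem coprod_conj_of_pow_eq_one (q : Coprod M N) {k : ℕ} (hk : k ≠ 0) (h1 : q ^ k = 1) :
    ∃ u : Coprod M N, (∃ x : M, q = u * Coprod.inl x * u⁻¹) ∨
      (∃ y : N, q = u * Coprod.inr y * u⁻¹) := by
  have h2 : (toI q) ^ k = 1 := by rw [← map_pow, h1, map_one]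
  obtain ⟨b, x, u, hu⟩ := Monoid.CoprodI.conj_of_pow_eq_one (toI q) hk h2
  have := congrArg ofI hu
  rw [ofI_toI] at this
  cases b with
  | true =>
    refine ⟨ofI u, Or.inl ⟨x, ?_⟩⟩
    rw [this]
    simp only [map_mul, map_inv, ofI_of_true]
    rfl
  | false =>
    refine ⟨ofI u, Or.inr ⟨x, ?_⟩⟩
    rw [this]
    simp only [map_mul, map_inv, ofI_of_false]
    rfl

end transfer

abbrev C (n : ℕ) : Type := Multiplicative (ZMod n)


theorem Cgen {n : ℕ} [NeZero n] (z : C n) :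
    ∃ m : ℕ, (Multiplicative.ofAdd (1 : ZMod n)) ^ m = z := by
  refine ⟨(Multiplicative.toAdd z).val, ?_⟩
  rw [← ofAdd_nsmul]
  conv_rhs => rw [← ofAdd_toAdd z]
  congr 1
  simp [nsmul_eq_mul, ZMod.natCast_val, ZMod.cast_id]

theorem Cpow_self {n : ℕ} : (Multiplicative.ofAdd (1 : ZMod n)) ^ n = 1 := by
  rw [← ofAdd_nsmul]
  simp [nsmul_eq_mul]

theorem toProd_conj {M N : Type} [CommGroup M] [CommGroup N] (u w : Coprod M N) :
    Coprod.toProd (u * w * u⁻¹) = Coprod.toProd w := by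
  rw [map_mul, map_mul, map_inv, mul_comm (Coprod.toProd u) (Coprod.toProd w), mul_inv_cancel_right]

/-- Under a surjective homomorphism `ψ : C p₁ ∗ C p₂ → C r₁ ∗ C r₂`, the images of the
standard generators `t₁, t₂` of the factors are conjugate to generators of the
factors `C r₁` and `C r₂`, one of each. -/
theorem images_of_generators_conjugate_to_factor_generators
    (p₁ p₂ r₁ r₂ : ℕ) (hp₁ : 2 ≤ p₁) (hp₂ : 2 ≤ p₂) (hr₁ : 2 ≤ r₁) (hr₂ : 2 ≤ r₂)
    (hp : Nat.gcd p₁ p₂ = 1) (hr : Nat.gcd r₁ r₂ = 1)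
    (ψ : Monoid.Coprod (C p₁) (C p₂) →* Monoid.Coprod (C r₁) (C r₂))
    (hψ : Function.Surjective ψ) :
    ∃ (s₁ s₂ u₁ u₂ : Monoid.Coprod (C r₁) (C r₂)),
      Subgroup.zpowers s₁ = (Monoid.Coprod.inl : C r₁ →* Monoid.Coprod (C r₁) (C r₂)).range ∧
      Subgroup.zpowers s₂ = (Monoid.Coprod.inr : C r₂ →* Monoid.Coprod (C r₁) (C r₂)).range ∧
      ((ψ (Monoid.Coprod.inl (Multiplicative.ofAdd (1 : ZMod p₁))) = u₁ * s₁ * u₁⁻¹ ∧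
        ψ (Monoid.Coprod.inr (Multiplicative.ofAdd (1 : ZMod p₂))) = u₂ * s₂ * u₂⁻¹) ∨
       (ψ (Monoid.Coprod.inl (Multiplicative.ofAdd (1 : ZMod p₁))) = u₁ * s₂ * u₁⁻¹ ∧
        ψ (Monoid.Coprod.inr (Multiplicative.ofAdd (1 : ZMod p₂))) = u₂ * s₁ * u₂⁻¹)) := by
  haveI : NeZero p₁ := ⟨by omega⟩
  haveI : NeZero p₂ := ⟨by omega⟩
  haveI : Fact (1 < r₁) := ⟨by omega⟩
  haveI : Fact (1 < r₂) := ⟨by omega⟩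
  set t₁ : Coprod (C p₁) (C p₂) := Coprod.inl (Multiplicative.ofAdd (1 : ZMod p₁)) with ht₁def
  set t₂ : Coprod (C p₁) (C p₂) := Coprod.inr (Multiplicative.ofAdd (1 : ZMod p₂)) with ht₂def
  have hψt₁ : (ψ t₁) ^ p₁ = 1 := by
    rw [← map_pow, ht₁def, ← map_pow, Cpow_self, map_one, map_one]
  have hψt₂ : (ψ t₂) ^ p₂ = 1 := by
    rw [← map_pow, ht₂def, ← map_pow, Cpow_self, map_one, map_one]
  obtain ⟨u₁, hc₁⟩ := coprod_conj_of_pow_eq_one (ψ t₁) (by omega : p₁ ≠ 0) hψt₁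
  obtain ⟨u₂, hc₂⟩ := coprod_conj_of_pow_eq_one (ψ t₂) (by omega : p₂ ≠ 0) hψt₂
  -- key membership lemma
  have key : ∀ (A : Subgroup (C r₁)) (B : Subgroup (C r₂)),
      Coprod.toProd (ψ t₁) ∈ A.prod B → Coprod.toProd (ψ t₂) ∈ A.prod B →
      ∀ s, Coprod.toProd (ψ s) ∈ A.prod B := by
    intro A B h₁ h₂ s
    induction s using Coprod.induction_on with
    | inl z =>
      obtain ⟨m, hm⟩ := Cgen z
      rw [← hm]
      have hz : (Coprod.inl ((Multiplicative.ofAdd (1 : ZMod p₁)) ^ m) :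
          Coprod (C p₁) (C p₂)) = t₁ ^ m := by rw [map_pow]
      rw [hz, map_pow, map_pow]
      exact pow_mem h₁ m
    | inr z =>
      obtain ⟨m, hm⟩ := Cgen z
      rw [← hm]
      have hz : (Coprod.inr ((Multiplicative.ofAdd (1 : ZMod p₂)) ^ m) :
          Coprod (C p₁) (C p₂)) = t₂ ^ m := by rw [map_pow]
      rw [hz, map_pow, map_pow]
      exact pow_mem h₂ m
    | mul x y hx hy =>
      rw [map_mul, map_mul]
      exact mul_mem hx hy
  have tp_surj : Function.Surjective
      (Coprod.toProd : Coprod (C r₁) (C r₂) →* C r₁ × C r₂) := by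
    rintro ⟨x, y⟩
    exact ⟨Coprod.inl x * Coprod.inr y, by
      simp [map_mul, Coprod.toProd_apply_inl, Coprod.toProd_apply_inr, Prod.ext_iff]⟩
  have surj2 : ∀ c : C r₁ × C r₂, ∃ s, Coprod.toProd (ψ s) = c := by
    intro c
    obtain ⟨w, hw⟩ := tp_surj c
    obtain ⟨s, hs⟩ := hψ w
    exact ⟨s, by rw [hs, hw]⟩
  -- rule out same-side cases
  rcases hc₁ with ⟨a, ha⟩ | ⟨b, hb⟩ <;> rcases hc₂ with ⟨a', ha'⟩ | ⟨b', hb'⟩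
  · -- both inl : contradiction
    exfalso
    obtain ⟨y₀, hy₀⟩ := exists_ne (1 : C r₂)
    obtain ⟨s, hs⟩ := surj2 (1, y₀)
    have hmem := key ⊤ ⊥ (by
        rw [ha, toProd_conj]
        rw [Coprod.toProd_apply_inl]
        exact Subgroup.mem_prod.2 ⟨trivial, one_mem _⟩)
      (by
        rw [ha', toProd_conj]
        rw [Coprod.toProd_apply_inl]
        exact Subgroup.mem_prod.2 ⟨trivial, one_mem _⟩) s
    rw [hs] at hmem
    exact hy₀ (Subgroup.mem_prod.1 hmem).2
  · -- inl a, inr b' : main case 1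
    have hmem := key (Subgroup.zpowers a) (Subgroup.zpowers b')
      (by rw [ha, toProd_conj, Coprod.toProd_apply_inl]
          exact Subgroup.mem_prod.2 ⟨Subgroup.mem_zpowers a, one_mem _⟩)
      (by rw [hb', toProd_conj, Coprod.toProd_apply_inr]
          exact Subgroup.mem_prod.2 ⟨one_mem _, Subgroup.mem_zpowers b'⟩)
    have hAtop : Subgroup.zpowers a = ⊤ := by
      rw [Subgroup.eq_top_iff']
      intro x
      obtain ⟨s, hs⟩ := surj2 (x, 1)
      have := hmem s
      rw [hs] at this
      exact (Subgroup.mem_prod.1 this).1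
    have hBtop : Subgroup.zpowers b' = ⊤ := by
      rw [Subgroup.eq_top_iff']
      intro y
      obtain ⟨s, hs⟩ := surj2 (1, y)
      have := hmem s
      rw [hs] at this
      exact (Subgroup.mem_prod.1 this).2
    refine ⟨Coprod.inl a, Coprod.inr b', u₁, u₂, ?_, ?_, Or.inl ⟨ha, hb'⟩⟩
    · rw [← MonoidHom.map_zpowers, hAtop, ← MonoidHom.range_eq_map]
    · rw [← MonoidHom.map_zpowers, hBtop, ← MonoidHom.range_eq_map]
  · -- inr b, inl a' : main case 2
    have hmem := key (Subgroup.zpowers a') (Subgroup.zpowers b)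
      (by rw [hb, toProd_conj, Coprod.toProd_apply_inr]
          exact Subgroup.mem_prod.2 ⟨one_mem _, Subgroup.mem_zpowers b⟩)
      (by rw [ha', toProd_conj, Coprod.toProd_apply_inl]
          exact Subgroup.mem_prod.2 ⟨Subgroup.mem_zpowers a', one_mem _⟩)
    have hAtop : Subgroup.zpowers a' = ⊤ := by
      rw [Subgroup.eq_top_iff']
      intro x
      obtain ⟨s, hs⟩ := surj2 (x, 1)
      have := hmem s
      rw [hs] at this
      exact (Subgroup.mem_prod.1 this).1
    have hBtop : Subgroup.zpowers b = ⊤ := by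
      rw [Subgroup.eq_top_iff']
      intro y
      obtain ⟨s, hs⟩ := surj2 (1, y)
      have := hmem s
      rw [hs] at this
      exact (Subgroup.mem_prod.1 this).2
    refine ⟨Coprod.inl a', Coprod.inr b, u₁, u₂, ?_, ?_, Or.inr ⟨hb, ha'⟩⟩
    · rw [← MonoidHom.map_zpowers, hAtop, ← MonoidHom.range_eq_map]
    · rw [← MonoidHom.map_zpowers, hBtop, ← MonoidHom.range_eq_map]
  · -- both inr : contradiction
    exfalso
    obtain ⟨x₀, hx₀⟩ := exists_ne (1 : C r₁)
    obtain ⟨s, hs⟩ := surj2 (x₀, 1)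
    have hmem := key ⊥ ⊤ (by
        rw [hb, toProd_conj]
        rw [Coprod.toProd_apply_inr]
        exact Subgroup.mem_prod.2 ⟨one_mem _, trivial⟩)
      (by
        rw [hb', toProd_conj]
        rw [Coprod.toProd_apply_inr]
        exact Subgroup.mem_prod.2 ⟨one_mem _, trivial⟩) s
    rw [hs] at hmem
    exact hx₀ (Subgroup.mem_prod.1 hmem).1
end

section
/- Let p₁, p₂ ≥ 2 with gcd(p₁,p₂) = 1 and r₁, r₂ ≥ 2 with gcd(r₁,r₂) = 1. There exists a surjective group homomorphism from the torus-knot group G(p₁,p₂) = ⟨u, v ∣ u^{p₁} = v^{p₂}⟩ onto the torus-knot group G(r₁,r₂) = ⟨a, b ∣ a^{r₁} = b^{r₂}⟩ if and only if either (r₁ divides p₁ and r₂ divides p₂) or (r₁ divides p₂ and r₂ divides p₁). (This is the group-theoretic content of Proposition 2, equivalence of statements (2) and (3), since the group of the (p,q)-torus knot is ⟨x, y ∣ x^p = y^q⟩.) -/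
/-- The single relator `x^p * (y^q)⁻¹` of the `(p,q)`-torus knot group. -/
abbrev torusRel (p q : ℕ) : Set (FreeGroup Bool) :=
  {FreeGroup.of true ^ p * (FreeGroup.of false ^ q)⁻¹}

/-- The `(p,q)`-torus knot group `⟨x, y ∣ x^p = y^q⟩`. -/
abbrev G (p q : ℕ) : Type := PresentedGroup (torusRel p q)

namespace TorusAux
open Monoid Monoid.CoprodI

section WordTheory

set_option linter.unusedSectionVars false
variable {ι : Type*} [DecidableEq ι] {H : ι → Type*} [∀ i, Group (H i)] [∀ i, DecidableEq (H i)]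

/-- The inverse of a reduced word: reverse the list and invert each letter. -/
def invWord (w : Word H) : Word H where
  toList := (w.toList.map fun l => ⟨l.1, l.2⁻¹⟩).reverse
  ne_one := by
    intro l hl
    simp only [List.mem_reverse, List.mem_map] at hl
    obtain ⟨a, ha, rfl⟩ := hl
    simpa using w.ne_one a ha
  chain_ne := by
    rw [List.isChain_reverse]
    refine List.isChain_map_of_isChain _ ?_ w.chain_ne
    intro a b h
    exact fun e => h e.symm

@[simp] lemma invWord_toList (w : Word H) :
    (invWord w).toList = (w.toList.map fun l => ⟨l.1, l.2⁻¹⟩).reverse := rfl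

lemma prod_invWord (w : Word H) : (invWord w).prod = w.prod⁻¹ := by
  simp only [Word.prod, invWord_toList, List.map_reverse, List.map_map]
  rw [List.prod_inv_reverse]
  congr 1
  rw [List.map_map]
  rfl

lemma prod_injective : Function.Injective (Word.prod : Word H → CoprodI H) := by
  have : (Word.prod : Word H → CoprodI H) = Word.equiv.symm := rfl
  rw [this]; exact Word.equiv.symm.injective

@[simp] lemma equiv_prod (w : Word H) : Word.equiv w.prod = w :=
  Word.equiv.apply_symm_apply w

@[simp] lemma prod_equiv (x : CoprodI H) : (Word.equiv x).prod = x :=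
  Word.equiv.symm_apply_apply x

lemma equiv_inv (x : CoprodI H) : Word.equiv x⁻¹ = invWord (Word.equiv x) := by
  apply prod_injective
  rw [prod_equiv, prod_invWord, prod_equiv]

lemma equiv_mul (x y : CoprodI H) : Word.equiv (x * y) = x • (Word.equiv y) := by
  apply prod_injective
  rw [prod_equiv, Word.prod_smul, prod_equiv]

lemma length_invWord (w : Word H) : (invWord w).toList.length = w.toList.length := by
  simp

lemma fstIdx_invWord (w : Word H) :
    (invWord w).fstIdx = w.toList.getLast?.map Sigma.fst := by
  rw [Word.fstIdx, invWord_toList, List.head?_reverse, List.getLast?_map, Option.map_map]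
  rfl

lemma rcons_length {i : ι} (p : Word.Pair H i) :
    (Word.rcons p).toList.length ≤ p.tail.toList.length + 1 := by
  rw [Word.rcons]
  split <;> simp [Word.cons]

lemma length_smul_le (i : ι) (m : H i) (w : Word H) :
    (Monoid.CoprodI.of m • w).toList.length ≤ w.toList.length + 1 := by
  rw [Word.of_smul_def]
  refine (rcons_length _).trans ?_
  have : w = Word.rcons (Word.equivPair i w) := ((Word.equivPair i).symm_apply_apply w).symm
  conv_rhs => rw [this]
  simp only [Word.rcons]
  split <;> simp

lemma length_smul_le_of_fstIdx (i : ι) (m : H i) (w : Word H) (h : w.fstIdx = some i) :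
    (Monoid.CoprodI.of m • w).toList.length ≤ w.toList.length := by
  rw [Word.of_smul_def]
  have hw : w = Word.rcons (Word.equivPair i w) := ((Word.equivPair i).symm_apply_apply w).symm
  have hhead : (Word.equivPair i w).head ≠ 1 := by
    intro h1
    rw [hw, Word.rcons, dif_pos h1] at h
    exact (Word.equivPair i w).fstIdx_ne h
  have h2 : w.toList.length = (Word.equivPair i w).tail.toList.length + 1 := by
    conv_lhs => rw [hw]
    rw [Word.rcons, dif_neg hhead]
    simp [Word.cons]
  rw [h2]
  exact rcons_length _

lemma smul_toList_of_fstIdx_ne {i : ι} (m : H i) (hm : m ≠ 1) (w : Word H)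
    (h : w.fstIdx ≠ some i) :
    (Monoid.CoprodI.of m • w).toList = ⟨i, m⟩ :: w.toList := by
  rw [Word.of_smul_def, Word.equivPair_eq_of_fstIdx_ne h]
  simp only [Word.rcons, mul_one]
  rw [dif_neg hm]
  rfl

lemma length_mul_of_le {i : ι} (x : CoprodI H) (m : H i)
    (h : (Word.equiv x).toList.getLast?.map Sigma.fst = some i) :
    (Word.equiv (x * Monoid.CoprodI.of m)).toList.length ≤ (Word.equiv x).toList.length := by
  have h1 : x * Monoid.CoprodI.of m = (Monoid.CoprodI.of m⁻¹ * x⁻¹)⁻¹ := by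
    rw [map_inv]; group
  rw [h1, equiv_inv, length_invWord, equiv_mul]
  have h2 : (Word.equiv x⁻¹).fstIdx = some i := by
    rw [equiv_inv, fstIdx_invWord, h]
  calc (Monoid.CoprodI.of m⁻¹ • Word.equiv x⁻¹).toList.length
      ≤ (Word.equiv x⁻¹).toList.length := length_smul_le_of_fstIdx i m⁻¹ _ h2
    _ = (Word.equiv x).toList.length := by rw [equiv_inv, length_invWord]

lemma neWord_prod_ne_one {i j : ι} (w : NeWord H i j) : w.prod ≠ 1 := by
  intro h
  have : w.toWord.prod = Word.empty.prod := by rw [Word.prod_empty]; exact h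
  have he : w.toWord = (Word.empty : Word H) := prod_injective this
  have := w.toList_ne_nil
  rw [show w.toList = w.toWord.toList from rfl, he] at this
  exact this rfl

lemma prod_pow_ne_one {i j : ι} (w : NeWord H i j) (hji : j ≠ i) {n : ℕ} (hn : n ≠ 0) :
    w.prod ^ n ≠ 1 := by
  suffices h : ∀ n : ℕ, n ≠ 0 → ∃ w' : NeWord H i j, w'.prod = w.prod ^ n by
    obtain ⟨w', hw'⟩ := h n hn
    rw [← hw']
    exact neWord_prod_ne_one w'
  intro n hn
  induction n with
  | zero => exact absurd rfl hn
  | succ k ih =>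
    rcases Nat.eq_zero_or_pos k with hk | hk
    · subst hk; exact ⟨w, by simp⟩
    · obtain ⟨w', hw'⟩ := ih (Nat.pos_iff_ne_zero.mp hk)
      exact ⟨w.append hji w', by rw [NeWord.append_prod, hw', pow_succ']⟩

/-- Every torsion element of a free product is conjugate into one of the factors. -/
theorem exists_conj_of_pow_eq_one [Nonempty ι] {n : ℕ} (hn : n ≠ 0) :
    ∀ x : CoprodI H, x ^ n = 1 →
      ∃ (i : ι) (m : H i) (g : CoprodI H), x = g * Monoid.CoprodI.of m * g⁻¹ := by
  suffices H : ∀ (N : ℕ) (x : CoprodI H), (Word.equiv x).toList.length ≤ N → x ^ n = 1 →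
      ∃ (i : ι) (m : H i) (g : CoprodI H), x = g * Monoid.CoprodI.of m * g⁻¹ from
    fun x hx => H (Word.equiv x).toList.length x le_rfl hx
  intro N
  induction N with
  | zero =>
    intro x hl _
    have he : Word.equiv x = Word.empty := Word.ext (List.length_eq_zero_iff.mp (Nat.le_zero.mp hl))
    have hx1 : x = 1 := by rw [← prod_equiv x, he, Word.prod_empty]
    exact ⟨Classical.arbitrary ι, 1, 1, by simp [hx1]⟩
  | succ N ih =>
    intro x hl hx
    rcases hLl : (Word.equiv x).toList with _ | ⟨a, T⟩
    · have he : Word.equiv x = Word.empty := Word.ext hLl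
      have hx1 : x = 1 := by rw [← prod_equiv x, he, Word.prod_empty]
      exact ⟨Classical.arbitrary ι, 1, 1, by simp [hx1]⟩
    rcases hT : T with _ | ⟨b, T'⟩
    · subst hT
      refine ⟨a.1, a.2, 1, ?_⟩
      have : x = (Word.equiv x).prod := (prod_equiv x).symm
      rw [this]
      rw [Word.prod, hLl]
      simp
    · subst hT
      by_cases hij : ((a :: b :: T').getLast (by simp)).1 = a.1
      · -- cyclic reduction
        have hne1 := (Word.equiv x).ne_one
        have hch := (Word.equiv x).chain_ne
        rw [hLl] at hne1 hch
        have hchT : (b :: T').Chain' fun l l' => l.1 ≠ l'.1 := (List.isChain_cons_cons.mp hch).2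
        have hab : a.1 ≠ b.1 := (List.isChain_cons_cons.mp hch).1
        set t : Word H := ⟨b :: T', fun l hl => hne1 l (List.mem_cons_of_mem a hl), hchT⟩ with ht
        have ha1 : a.2 ≠ 1 := hne1 a List.mem_cons_self
        have hx_eq : x = Monoid.CoprodI.of a.2 * t.prod := by
          conv_lhs => rw [← prod_equiv x]
          rw [Word.prod, hLl, List.map_cons, List.prod_cons]
          rfl
        set x' := (Monoid.CoprodI.of a.2)⁻¹ * x * Monoid.CoprodI.of a.2 with hx'
        have hx'n : x' ^ n = 1 := by
          have : x' = (MulAut.conj (Monoid.CoprodI.of a.2)⁻¹) x := by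
            simp [hx', MulAut.conj_apply, mul_assoc]
          rw [this, ← map_pow, hx, map_one]
        have hx'e : x' = t.prod * Monoid.CoprodI.of a.2 := by
          rw [hx', hx_eq]; group
        have hlast_t : (Word.equiv t.prod).toList.getLast?.map Sigma.fst = some a.1 := by
          rw [equiv_prod]
          show ((b :: T').getLast?).map Sigma.fst = some a.1
          rw [List.getLast?_eq_getLast (by simp), Option.map_some, Option.some_inj,
            ← List.getLast_cons (a := a) (by simp)]
          exact hij
        have hlen' : (Word.equiv x').toList.length ≤ N := by
          have h1 : (Word.equiv x').toList.length ≤ (Word.equiv t.prod).toList.length := by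
            rw [hx'e]
            exact length_mul_of_le t.prod a.2 hlast_t
          have h2 : (Word.equiv t.prod).toList.length = (b :: T').length := by
            rw [equiv_prod]
          have h3 : (a :: b :: T').length ≤ N + 1 := by rw [← hLl]; exact hl
          simp only [List.length_cons] at h2 h3 ⊢
          omega
        obtain ⟨i0, m0, g0, h0⟩ := ih x' hlen' hx'n
        refine ⟨i0, m0, Monoid.CoprodI.of a.2 * g0, ?_⟩
        have : x = Monoid.CoprodI.of a.2 * x' * (Monoid.CoprodI.of a.2)⁻¹ := by
          rw [hx']; group
        rw [this, h0]
        group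
      · -- cyclically reduced : infinite order, contradiction
        exfalso
        have hne : Word.equiv x ≠ Word.empty := by
          intro h; rw [h] at hLl; simp [Word.empty] at hLl
        obtain ⟨i', j', w', hw'⟩ := NeWord.of_word (Word.equiv x) hne
        have hprod : w'.prod = x := by rw [NeWord.prod, hw', prod_equiv]
        have hlist : w'.toList = a :: b :: T' := by
          rw [show w'.toList = w'.toWord.toList from rfl, hw', hLl]
        have hhead : i' = a.1 := by
          have := w'.toList_head?
          rw [hlist] at this
          simp only [List.head?_cons, Option.some_inj] at this
          rw [this]
        have hlast : j' = ((a :: b :: T').getLast (by simp)).1 := by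
          have := w'.toList_getLast?
          rw [hlist, List.getLast?_eq_getLast (by simp)] at this
          rw [Option.some_inj] at this
          rw [this]
        have : j' ≠ i' := by rw [hhead, hlast]; exact hij
        exact prod_pow_ne_one w' this hn (by rw [hprod]; exact hx)

/-- A central element of a free product of nontrivial groups (over at least two indices)
is trivial. -/
theorem eq_one_of_forall_commute [Nontrivial ι] (hnt : ∀ i : ι, ∃ m : H i, m ≠ 1)
    (x : CoprodI H) (hx : ∀ y : CoprodI H, x * y = y * x) : x = 1 := by
  by_contra h1
  have hne : Word.equiv x ≠ Word.empty := by
    intro h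
    exact h1 (by rw [← prod_equiv x, h, Word.prod_empty])
  have hLnil : (Word.equiv x).toList ≠ [] := fun h => hne (Word.ext h)
  set L := (Word.equiv x).toList with hL
  obtain ⟨k, hk⟩ := exists_ne (L.getLast hLnil).1
  obtain ⟨m, hm⟩ := hnt k
  have hfstinv : (invWord (Word.equiv x)).fstIdx ≠ some k := by
    rw [fstIdx_invWord, List.getLast?_eq_getLast hLnil, Option.map_some]
    intro h
    rw [Option.some_inj] at h
    exact hk h.symm
  have hBeq : (Word.equiv (x * Monoid.CoprodI.of m)).toList = L ++ [⟨k, m⟩] := by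
    have h1' : x * Monoid.CoprodI.of m = (Monoid.CoprodI.of m⁻¹ * x⁻¹)⁻¹ := by
      rw [map_inv]; group
    rw [h1', equiv_inv, equiv_mul, equiv_inv]
    rw [invWord_toList,
      smul_toList_of_fstIdx_ne m⁻¹ (inv_ne_one.mpr hm) _ hfstinv, invWord_toList]
    simp only [List.map_cons, inv_inv, List.map_reverse, List.map_map, List.reverse_cons,
      List.reverse_reverse]
    congr 1
    have : ((fun l : (Σ i, H i) => (⟨l.1, l.2⁻¹⟩ : Σ i, H i)) ∘
        fun l : (Σ i, H i) => (⟨l.1, l.2⁻¹⟩ : Σ i, H i)) = id := by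
      funext l
      simp
    rw [this, List.map_id]
  have hA := hx (Monoid.CoprodI.of m)
  by_cases hkf : (Word.equiv x).fstIdx = some k
  · have hlenA : (Word.equiv (Monoid.CoprodI.of m * x)).toList.length ≤ L.length := by
      rw [equiv_mul]
      exact length_smul_le_of_fstIdx k m _ hkf
    rw [← hA, hBeq] at hlenA
    simp at hlenA
  · have hAeq : (Word.equiv (Monoid.CoprodI.of m * x)).toList = ⟨k, m⟩ :: L := by
      rw [equiv_mul]
      exact smul_toList_of_fstIdx_ne m hm _ hkf
    have heq : (⟨k, m⟩ : Σ i, H i) :: L = L ++ [⟨k, m⟩] := by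
      rw [← hAeq, ← hBeq, hA]
    have h3 := congrArg List.head? heq
    rw [List.head?_cons, List.head?_append_of_ne_nil _ hLnil,
      List.head?_eq_head hLnil] at h3
    rw [Option.some_inj] at h3
    apply hkf
    rw [Word.fstIdx, ← hL, List.head?_eq_head hLnil, ← h3]
    rfl



end WordTheory

lemma mem_of_coprime_powers {H : Type*} [Group H] (R : Subgroup H) (z : H) (k l : ℕ)
    (hco : Nat.Coprime k l) (h1 : z ^ k ∈ R) (h2 : z ^ l ∈ R) : z ∈ R := by
  obtain ⟨c, d, hcd⟩ := Nat.isCoprime_iff_coprime.mpr hco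
  have hz : z = (z ^ k) ^ c * (z ^ l) ^ d := by
    rw [← zpow_natCast z k, ← zpow_natCast z l, ← zpow_mul, ← zpow_mul, ← zpow_add,
      mul_comm (k : ℤ) c, mul_comm (l : ℤ) d, hcd, zpow_one]
  rw [hz]
  exact mul_mem (R.zpow_mem h1 c) (R.zpow_mem h2 d)

lemma rel_eq (p q : ℕ) :
    (PresentedGroup.of true : G p q) ^ p = (PresentedGroup.of false : G p q) ^ q := by
  have h : PresentedGroup.mk (torusRel p q)
      (FreeGroup.of true ^ p * (FreeGroup.of false ^ q)⁻¹) = 1 := by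
    apply (QuotientGroup.eq_one_iff _).mpr
    exact Subgroup.subset_normalClosure (Set.mem_singleton _)
  rw [map_mul, map_pow, map_inv, map_pow] at h
  exact mul_inv_eq_one.mp h

lemma exists_epi_of_dvd (p q r s : ℕ) (hpq : Nat.Coprime p q) (hr : r ∣ p) (hs : s ∣ q) :
    ∃ φ : G p q →* G r s, Function.Surjective φ := by
  obtain ⟨k, hk⟩ := hr
  obtain ⟨l, hl⟩ := hs
  have hrp : r ∣ p := ⟨k, hk⟩
  have hsq : s ∣ q := ⟨l, hl⟩
  set a : G r s := PresentedGroup.of true with ha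
  set b : G r s := PresentedGroup.of false with hb
  have hab : a ^ r = b ^ s := rel_eq r s
  have hkp : k ∣ p := ⟨r, by rw [hk, mul_comm]⟩
  have hlq : l ∣ q := ⟨s, by rw [hl, mul_comm]⟩
  have hkl : Nat.Coprime k l := Nat.Coprime.coprime_dvd_right hlq (hpq.coprime_dvd_left hkp)
  have hlr : Nat.Coprime l r := Nat.Coprime.coprime_dvd_right hrp (hpq.symm.coprime_dvd_left hlq)
  have hks : Nat.Coprime k s := Nat.Coprime.coprime_dvd_right hsq (hpq.coprime_dvd_left hkp)
  have hrel : ∀ w ∈ torusRel p q,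
      FreeGroup.lift (fun t : Bool => cond t (a ^ l) (b ^ k)) w = 1 := by
    intro w hw
    rw [Set.mem_singleton_iff] at hw
    subst hw
    simp only [map_mul, map_pow, map_inv, FreeGroup.lift_apply_of, Bool.cond_true, Bool.cond_false]
    rw [mul_inv_eq_one, ← pow_mul, ← pow_mul, hk, hl,
      show l * (r * k) = r * (k * l) by ring, show k * (s * l) = s * (k * l) by ring,
      pow_mul a r (k * l), pow_mul b s (k * l), hab]
  refine ⟨PresentedGroup.toGroup hrel, fun y => ?_⟩
  suffices hR : ∀ x : G r s, x ∈ (PresentedGroup.toGroup hrel).range by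
    obtain ⟨x, hx⟩ := hR y
    exact ⟨x, hx⟩
  intro x
  set R := (PresentedGroup.toGroup hrel).range with hRdef
  have hal : a ^ l ∈ R := ⟨PresentedGroup.of true, by simp [PresentedGroup.toGroup.of]⟩
  have hbk : b ^ k ∈ R := ⟨PresentedGroup.of false, by simp [PresentedGroup.toGroup.of]⟩
  have hzl : (a ^ r) ^ l ∈ R := by
    have : (a ^ r) ^ l = (a ^ l) ^ r := by rw [← pow_mul, ← pow_mul, mul_comm]
    rw [this]
    exact pow_mem hal r
  have hzk : (a ^ r) ^ k ∈ R := by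
    have : (a ^ r) ^ k = (b ^ k) ^ s := by rw [hab, ← pow_mul, ← pow_mul, mul_comm]
    rw [this]
    exact pow_mem hbk s
  have hz : a ^ r ∈ R := mem_of_coprime_powers R _ k l hkl hzk hzl
  have haR : a ∈ R := mem_of_coprime_powers R a l r hlr hal hz
  have hbR : b ∈ R := mem_of_coprime_powers R b k s hks hbk (hab ▸ hz)
  refine PresentedGroup.generated_by _ R ?_ x
  intro j
  cases j
  · exact hbR
  · exact haR


open Monoid



/-- The two cyclic factors of `ℤ/r * ℤ/s`. -/
abbrev Fac (r s : ℕ) : Bool → Type := fun b => Multiplicative (ZMod (cond b r s))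

/-- The generator of the factor. -/
def gen (r s : ℕ) (b : Bool) : Fac r s b := Multiplicative.ofAdd (1 : ZMod (cond b r s))

lemma gen_pow (r s : ℕ) (b : Bool) : gen r s b ^ (cond b r s) = 1 := by
  have : (cond b r s) • (1 : ZMod (cond b r s)) = 0 := by
    simp [nsmul_eq_mul, ZMod.natCast_self]
  apply Multiplicative.toAdd.injective
  simpa [gen, toAdd_pow] using this

/-- The projection from the torus knot group onto the free product `ℤ/r * ℤ/s`. -/
lemma rho_exists (r s : ℕ) :
    ∃ ρ : G r s →* CoprodI (Fac r s),
      (∀ b : Bool, ρ (PresentedGroup.of b) = CoprodI.of (gen r s b)) := by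
  have hrel : ∀ w ∈ torusRel r s,
      FreeGroup.lift (fun b : Bool => CoprodI.of (gen r s b)) w = 1 := by
    intro w hw
    rw [Set.mem_singleton_iff] at hw
    subst hw
    simp only [map_mul, map_pow, map_inv, FreeGroup.lift_apply_of]
    rw [← map_pow, ← map_pow]
    rw [show gen r s true ^ r = 1 from gen_pow r s true,
      show gen r s false ^ s = 1 from gen_pow r s false]
    simp
  exact ⟨PresentedGroup.toGroup hrel, fun b => PresentedGroup.toGroup.of hrel⟩

lemma rho_surjective (r s : ℕ) [NeZero r] [NeZero s] (ρ : G r s →* CoprodI (Fac r s))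
    (hρ : ∀ b : Bool, ρ (PresentedGroup.of b) = CoprodI.of (gen r s b)) :
    Function.Surjective ρ := by
  intro y
  suffices h : y ∈ ρ.range by exact h
  induction y using CoprodI.induction_on with
  | one => exact one_mem _
  | mul x y hx hy => exact mul_mem hx hy
  | of b m =>
    haveI : NeZero (cond b r s) := by cases b <;> assumption
    have hm : m = gen r s b ^ (Multiplicative.toAdd m).val := by
      apply Multiplicative.toAdd.injective
      rw [toAdd_pow]
      show Multiplicative.toAdd m = (Multiplicative.toAdd m).val • (1 : ZMod (cond b r s))
      simp [nsmul_eq_mul, ZMod.natCast_val, ZMod.cast_id]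
    have hg : Monoid.CoprodI.of (gen r s b) ∈ ρ.range := ⟨PresentedGroup.of b, hρ b⟩
    rw [hm, map_pow]
    exact pow_mem hg _


open Monoid


/-- Projection onto the first factor. -/
def projT (r s : ℕ) : CoprodI (Fac r s) →* Multiplicative (ZMod r) :=
  CoprodI.lift (fun b =>
    Bool.rec (motive := fun b => Fac r s b →* Multiplicative (ZMod r)) 1 (MonoidHom.id _) b)

/-- Projection onto the second factor. -/
def projF (r s : ℕ) : CoprodI (Fac r s) →* Multiplicative (ZMod s) :=
  CoprodI.lift (fun b =>
    Bool.rec (motive := fun b => Fac r s b →* Multiplicative (ZMod s)) (MonoidHom.id _) 1 b)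

@[simp] lemma projT_of_true (r s : ℕ) (m : Fac r s true) :
    projT r s (CoprodI.of m) = m := by rw [projT, CoprodI.lift_of]; rfl
@[simp] lemma projT_of_false (r s : ℕ) (m : Fac r s false) :
    projT r s (CoprodI.of m) = 1 := by rw [projT, CoprodI.lift_of]; rfl
@[simp] lemma projF_of_true (r s : ℕ) (m : Fac r s true) :
    projF r s (CoprodI.of m) = 1 := by rw [projF, CoprodI.lift_of]; rfl
@[simp] lemma projF_of_false (r s : ℕ) (m : Fac r s false) :
    projF r s (CoprodI.of m) = m := by rw [projF, CoprodI.lift_of]; rfl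

lemma dvd_of_proj {r n : ℕ} (m z : Multiplicative (ZMod r))
    (hmn : m ^ n = 1) (hall : ∀ z : Multiplicative (ZMod r), z ∈ Subgroup.zpowers m) :
    r ∣ n := by
  obtain ⟨kk, hkk⟩ := hall (Multiplicative.ofAdd (1 : ZMod r))
  have h1 : (kk : ZMod r) * Multiplicative.toAdd m = 1 := by
    have := congrArg Multiplicative.toAdd hkk
    rw [toAdd_zpow] at this
    rw [← zsmul_eq_mul]
    exact this
  have h2 : (n : ZMod r) * Multiplicative.toAdd m = 0 := by
    have := congrArg Multiplicative.toAdd hmn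
    rw [toAdd_pow] at this
    rw [← nsmul_eq_mul]
    exact this
  have h3 : (n : ZMod r) = 0 := by
    calc (n : ZMod r) = (n : ZMod r) * ((kk : ZMod r) * Multiplicative.toAdd m) := by
          rw [h1, mul_one]
      _ = (kk : ZMod r) * ((n : ZMod r) * Multiplicative.toAdd m) := by ring
      _ = 0 := by rw [h2, mul_zero]
  exact (ZMod.natCast_eq_zero_iff n r).mp h3

lemma dvd_true {r s n : ℕ} (x y : CoprodI (Fac r s)) (g : CoprodI (Fac r s)) (m : Fac r s true)
    (hx : x = g * CoprodI.of m * g⁻¹)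
    (hy : ∃ (h : CoprodI (Fac r s)) (m' : Fac r s false), y = h * CoprodI.of m' * h⁻¹)
    (htop : ∀ z, z ∈ Subgroup.closure ({x, y} : Set (CoprodI (Fac r s))))
    (hxn : x ^ n = 1) : r ∣ n := by
  have hπx : projT r s x = m := by
    rw [hx, map_mul, map_mul, map_inv, projT_of_true, mul_comm (projT r s g) m,
      mul_inv_cancel_right]
  have hπy : projT r s y = 1 := by
    obtain ⟨h, m', rfl⟩ := hy
    rw [map_mul, map_mul, map_inv, projT_of_false, mul_one, mul_inv_cancel]
  have hle : Subgroup.closure ({x, y} : Set (CoprodI (Fac r s))) ≤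
      Subgroup.comap (projT r s) (Subgroup.zpowers m) := by
    rw [Subgroup.closure_le]
    rintro z (rfl | rfl)
    · simp only [SetLike.mem_coe, Subgroup.mem_comap, hπx]
      exact Subgroup.mem_zpowers m
    · simp only [SetLike.mem_coe, Subgroup.mem_comap, hπy]
      exact one_mem _
  have hall : ∀ z : Multiplicative (ZMod r), z ∈ Subgroup.zpowers m := by
    intro z
    have h1 := hle (htop (CoprodI.of (i := true) z))
    rwa [Subgroup.mem_comap, projT_of_true] at h1
  have hmn : m ^ n = 1 := by
    have := congrArg (projT r s) hxn
    rwa [map_pow, hπx, map_one] at this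
  exact dvd_of_proj m 1 hmn hall

lemma dvd_false {r s n : ℕ} (x y : CoprodI (Fac r s)) (g : CoprodI (Fac r s)) (m : Fac r s false)
    (hx : x = g * CoprodI.of m * g⁻¹)
    (hy : ∃ (h : CoprodI (Fac r s)) (m' : Fac r s true), y = h * CoprodI.of m' * h⁻¹)
    (htop : ∀ z, z ∈ Subgroup.closure ({x, y} : Set (CoprodI (Fac r s))))
    (hxn : x ^ n = 1) : s ∣ n := by
  have hπx : projF r s x = m := by
    rw [hx, map_mul, map_mul, map_inv, projF_of_false, mul_comm (projF r s g) m,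
      mul_inv_cancel_right]
  have hπy : projF r s y = 1 := by
    obtain ⟨h, m', rfl⟩ := hy
    rw [map_mul, map_mul, map_inv, projF_of_true, mul_one, mul_inv_cancel]
  have hle : Subgroup.closure ({x, y} : Set (CoprodI (Fac r s))) ≤
      Subgroup.comap (projF r s) (Subgroup.zpowers m) := by
    rw [Subgroup.closure_le]
    rintro z (rfl | rfl)
    · simp only [SetLike.mem_coe, Subgroup.mem_comap, hπx]
      exact Subgroup.mem_zpowers m
    · simp only [SetLike.mem_coe, Subgroup.mem_comap, hπy]
      exact one_mem _
  have hall : ∀ z : Multiplicative (ZMod s), z ∈ Subgroup.zpowers m := by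
    intro z
    have h1 := hle (htop (CoprodI.of (i := false) z))
    rwa [Subgroup.mem_comap, projF_of_false] at h1
  have hmn : m ^ n = 1 := by
    have := congrArg (projF r s) hxn
    rwa [map_pow, hπx, map_one] at this
  exact dvd_of_proj m 1 hmn hall

lemma conflict_true {r s : ℕ} (hs : 1 < s) (x y : CoprodI (Fac r s))
    (hx : ∃ (g : CoprodI (Fac r s)) (m : Fac r s true), x = g * CoprodI.of m * g⁻¹)
    (hy : ∃ (h : CoprodI (Fac r s)) (m' : Fac r s true), y = h * CoprodI.of m' * h⁻¹)
    (htop : ∀ z, z ∈ Subgroup.closure ({x, y} : Set (CoprodI (Fac r s)))) : False := by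
  haveI : Fact (1 < s) := ⟨hs⟩
  have hπ : ∀ z : CoprodI (Fac r s),
      (∃ (g : CoprodI (Fac r s)) (m : Fac r s true), z = g * CoprodI.of m * g⁻¹) →
      projF r s z = 1 := by
    rintro z ⟨g, m, rfl⟩
    rw [map_mul, map_mul, map_inv, projF_of_true, mul_one, mul_inv_cancel]
  have hle : Subgroup.closure ({x, y} : Set (CoprodI (Fac r s))) ≤ (projF r s).ker := by
    rw [Subgroup.closure_le]
    rintro z (rfl | rfl)
    · exact hπ _ hx
    · exact hπ _ hy
  have h1 := hle (htop (CoprodI.of (i := false) (Multiplicative.ofAdd (1 : ZMod s))))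
  rw [MonoidHom.mem_ker, projF_of_false] at h1
  have : (1 : ZMod s) = 0 := by
    have := congrArg Multiplicative.toAdd h1
    simpa using this
  exact one_ne_zero this

lemma conflict_false {r s : ℕ} (hr : 1 < r) (x y : CoprodI (Fac r s))
    (hx : ∃ (g : CoprodI (Fac r s)) (m : Fac r s false), x = g * CoprodI.of m * g⁻¹)
    (hy : ∃ (h : CoprodI (Fac r s)) (m' : Fac r s false), y = h * CoprodI.of m' * h⁻¹)
    (htop : ∀ z, z ∈ Subgroup.closure ({x, y} : Set (CoprodI (Fac r s)))) : False := by
  haveI : Fact (1 < r) := ⟨hr⟩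
  have hπ : ∀ z : CoprodI (Fac r s),
      (∃ (g : CoprodI (Fac r s)) (m : Fac r s false), z = g * CoprodI.of m * g⁻¹) →
      projT r s z = 1 := by
    rintro z ⟨g, m, rfl⟩
    rw [map_mul, map_mul, map_inv, projT_of_false, mul_one, mul_inv_cancel]
  have hle : Subgroup.closure ({x, y} : Set (CoprodI (Fac r s))) ≤ (projT r s).ker := by
    rw [Subgroup.closure_le]
    rintro z (rfl | rfl)
    · exact hπ _ hx
    · exact hπ _ hy
  have h1 := hle (htop (CoprodI.of (i := true) (Multiplicative.ofAdd (1 : ZMod r))))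
  rw [MonoidHom.mem_ker, projT_of_true] at h1
  have : (1 : ZMod r) = 0 := by
    have := congrArg Multiplicative.toAdd h1
    simpa using this
  exact one_ne_zero this



lemma exists_epi_swap (p q : ℕ) : ∃ σ : G p q →* G q p, Function.Surjective σ := by
  have hrel : ∀ w ∈ torusRel p q,
      FreeGroup.lift (fun t : Bool =>
        cond t (PresentedGroup.of false : G q p) (PresentedGroup.of true)) w = 1 := by
    intro w hw
    rw [Set.mem_singleton_iff] at hw
    subst hw
    simp only [map_mul, map_pow, map_inv, FreeGroup.lift_apply_of, Bool.cond_true, Bool.cond_false]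
    rw [mul_inv_eq_one, ← rel_eq q p]
  refine ⟨PresentedGroup.toGroup hrel, fun y => ?_⟩
  suffices hR : ∀ x : G q p, x ∈ (PresentedGroup.toGroup hrel).range by
    obtain ⟨x, hx⟩ := hR y
    exact ⟨x, hx⟩
  intro x
  refine PresentedGroup.generated_by _ _ ?_ x
  intro j
  cases j
  · exact ⟨PresentedGroup.of true, by simp [PresentedGroup.toGroup.of]⟩
  · exact ⟨PresentedGroup.of false, by simp [PresentedGroup.toGroup.of]⟩

lemma dvds_of_epi (p q r s : ℕ) (hp : p ≠ 0) (hq : q ≠ 0) (hr2 : 2 ≤ r) (hs2 : 2 ≤ s)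
    (φ : G p q →* G r s) (hφ : Function.Surjective φ) :
    (r ∣ p ∧ s ∣ q) ∨ (r ∣ q ∧ s ∣ p) := by
  haveI : NeZero r := ⟨by omega⟩
  haveI : NeZero s := ⟨by omega⟩
  obtain ⟨ρ, hρ⟩ := rho_exists r s
  have hρs := rho_surjective r s ρ hρ
  set χ := ρ.comp φ with hχdef
  have hχ : Function.Surjective χ := hρs.comp hφ
  set U := χ (PresentedGroup.of true) with hU
  set V := χ (PresentedGroup.of false) with hV
  have hUV : U ^ p = V ^ q := by rw [hU, hV, ← map_pow, ← map_pow, rel_eq p q]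
  have htop : ∀ z : CoprodI (Fac r s), z ∈ Subgroup.closure ({U, V} : Set _) := by
    intro z
    obtain ⟨x, rfl⟩ := hχ z
    have hx := PresentedGroup.generated_by _
      (Subgroup.comap χ (Subgroup.closure ({U, V} : Set _))) ?_ x
    · rwa [Subgroup.mem_comap] at hx
    · intro j
      rw [Subgroup.mem_comap]
      cases j
      · exact Subgroup.subset_closure (by simp [hV])
      · exact Subgroup.subset_closure (by simp [hU])
  have hcomm : ∀ y : CoprodI (Fac r s), (U ^ p) * y = y * (U ^ p) := by
    intro y
    have hle : Subgroup.closure ({U, V} : Set _) ≤ Subgroup.centralizer {U ^ p} := by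
      rw [Subgroup.closure_le]
      rintro z (rfl | rfl) <;> rw [SetLike.mem_coe, Subgroup.mem_centralizer_iff]
      · intro g hg
        rw [Set.mem_singleton_iff] at hg
        subst hg
        exact ((Commute.refl U).pow_left p).eq
      · intro g hg
        rw [Set.mem_singleton_iff] at hg
        subst hg
        rw [hUV]
        exact ((Commute.refl V).pow_left q).eq
    have hy := hle (htop y)
    rw [Subgroup.mem_centralizer_iff] at hy
    exact hy _ (Set.mem_singleton _)
  have hnt : ∀ b : Bool, ∃ m : Fac r s b, m ≠ 1 := by
    intro b
    haveI : Fact (1 < cond b r s) := by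
      cases b
      · exact ⟨(by omega : 1 < s)⟩
      · exact ⟨(by omega : 1 < r)⟩
    refine ⟨Multiplicative.ofAdd 1, fun h => ?_⟩
    have := congrArg Multiplicative.toAdd h
    simp at this
  have hU1 : U ^ p = 1 := eq_one_of_forall_commute hnt (U ^ p) hcomm
  have hV1 : V ^ q = 1 := by rw [← hUV, hU1]
  obtain ⟨iU, mU, gU, hgU⟩ := exists_conj_of_pow_eq_one (H := Fac r s) hp U hU1
  obtain ⟨iV, mV, gV, hgV⟩ := exists_conj_of_pow_eq_one (H := Fac r s) hq V hV1
  have htop' : ∀ z : CoprodI (Fac r s), z ∈ Subgroup.closure ({V, U} : Set _) := by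
    intro z
    rw [Set.pair_comm V U]
    exact htop z
  cases iU <;> cases iV
  · exact (conflict_false (by omega) U V ⟨gU, mU, hgU⟩ ⟨gV, mV, hgV⟩ htop).elim
  · exact Or.inr ⟨dvd_true V U gV mV hgV ⟨gU, mU, hgU⟩ htop' hV1,
      dvd_false U V gU mU hgU ⟨gV, mV, hgV⟩ htop hU1⟩
  · exact Or.inl ⟨dvd_true U V gU mU hgU ⟨gV, mV, hgV⟩ htop hU1,
      dvd_false V U gV mV hgV ⟨gU, mU, hgU⟩ htop' hV1⟩
  · exact (conflict_true (by omega) U V ⟨gU, mU, hgU⟩ ⟨gV, mV, hgV⟩ htop).elim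

end TorusAux

/-- Proposition 2, (2) ⇔ (3): there is an epimorphism `G(p₁,p₂) → G(r₁,r₂)` of torus-knot
groups if and only if `r₁ ∣ p₁` and `r₂ ∣ p₂`, or `r₁ ∣ p₂` and `r₂ ∣ p₁`. -/
theorem torus_knot_group_epimorphism_iff
    (p₁ p₂ r₁ r₂ : ℕ) (hp₁ : 2 ≤ p₁) (hp₂ : 2 ≤ p₂) (hr₁ : 2 ≤ r₁) (hr₂ : 2 ≤ r₂)
    (hp : Nat.gcd p₁ p₂ = 1) (hr : Nat.gcd r₁ r₂ = 1) :
    (∃ φ : G p₁ p₂ →* G r₁ r₂, Function.Surjective φ) ↔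
      ((r₁ ∣ p₁ ∧ r₂ ∣ p₂) ∨ (r₁ ∣ p₂ ∧ r₂ ∣ p₁)) := by
  constructor
  · rintro ⟨φ, hφ⟩
    exact TorusAux.dvds_of_epi p₁ p₂ r₁ r₂ (by omega) (by omega) hr₁ hr₂ φ hφ
  · rintro (⟨h1, h2⟩ | ⟨h1, h2⟩)
    · exact TorusAux.exists_epi_of_dvd p₁ p₂ r₁ r₂ hp h1 h2
    · obtain ⟨ψ, hψ⟩ := TorusAux.exists_epi_of_dvd p₂ p₁ r₁ r₂ (Nat.coprime_comm.mp hp) h1 h2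
      obtain ⟨σ, hσ⟩ := TorusAux.exists_epi_swap p₁ p₂
      exact ⟨ψ.comp σ, hψ.comp hσ⟩
end

section
/- Let r₁, r₂ ≥ 2 with gcd(r₁,r₂) = 1, and let c be an element of the free product C_{r₁} ∗ C_{r₂}. If the subgroup generated by the two elements t₁ and c⁻¹ t₂ c is the whole group C_{r₁} ∗ C_{r₂}, then there exist integers s and t such that c = t₂^s t₁^t. (This is the generation exercise, Exercise 15, p. 194 of Magnus–Karrass–Solitar, used in the proof of Proposition 3: if {a, c⁻¹ b c} generates ℤ_{r₁} ∗ ℤ_{r₂}, then c has the form b^s a^t.) -/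
open Monoid

namespace MKSAux

variable {H : Bool → Type*} [∀ i, Group (H i)]

open CoprodI

/-- Strip the last letter off a word ending at index `false`. -/
lemma strip_last {i j : Bool} (u : NeWord H i j) (hj : j = false) :
    (i = false ∧ ∃ a : H false, u.prod = of a) ∨
    (∃ (w : NeWord H i true) (a : H false), u.prod = w.prod * of a) := by
  induction u with
  | singleton x hx =>
    subst hj
    exact Or.inl ⟨rfl, x, (NeWord.prod_singleton x hx).symm ▸ rfl⟩
  | @append i j k l w₁ hne w₂ ih₁ ih₂ =>
    subst hj
    rcases ih₂ rfl with ⟨hk, a, ha⟩ | ⟨w', a, ha⟩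
    · subst hk
      have hj' : j = true := by
        cases j
        · exact absurd rfl hne
        · rfl
      subst hj'
      exact Or.inr ⟨w₁, a, by rw [NeWord.append_prod, ha]⟩
    · exact Or.inr ⟨NeWord.append w₁ hne w', a, by
        rw [NeWord.append_prod, ha, NeWord.append_prod, mul_assoc]⟩

/-- Strip the first letter off a word starting at index `true`. -/
lemma strip_head {i j : Bool} (u : NeWord H i j) (hi : i = true) :
    (j = true ∧ ∃ b : H true, u.prod = of b) ∨
    (∃ (b : H true) (w : NeWord H false j), u.prod = of b * w.prod) := by
  induction u with
  | singleton x hx =>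
    subst hi
    exact Or.inl ⟨rfl, x, (NeWord.prod_singleton x hx).symm ▸ rfl⟩
  | @append i j k l w₁ hne w₂ ih₁ ih₂ =>
    subst hi
    rcases ih₁ rfl with ⟨hj, b, hb⟩ | ⟨b, w', hb⟩
    · subst hj
      have hk : k = false := by
        cases k
        · rfl
        · exact absurd rfl hne
      subst hk
      exact Or.inr ⟨b, w₂, by rw [NeWord.append_prod, hb]⟩
    · exact Or.inr ⟨b, NeWord.append w' hne w₂, by
        rw [NeWord.append_prod, hb, NeWord.append_prod, mul_assoc]⟩

/-- Every element decomposes as `of b * d * of a` with `d` trivial or a word from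
`false` to `true`. -/
lemma decomp (c : CoprodI H) :
    ∃ (b : H true) (a : H false) (d : CoprodI H),
      c = of b * d * of a ∧ (d = 1 ∨ ∃ w : NeWord H false true, d = w.prod) := by
  classical
  by_cases hc : c = 1
  · exact ⟨1, 1, 1, by simp [hc], Or.inl rfl⟩
  · set W := Word.equiv (M := H) c with hW
    have hprod : W.prod = c := by
      have : W = c • Word.empty := rfl
      rw [this, Word.prod_smul, Word.prod_empty, mul_one]
    have hne : W ≠ Word.empty := by
      intro h
      rw [h, Word.prod_empty] at hprod
      exact hc hprod.symm
    obtain ⟨i, j, u, hu⟩ := NeWord.of_word W hne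
    have huc : u.prod = c := by rw [NeWord.prod, hu, hprod]
    cases i with
    | false =>
      cases j with
      | false =>
        rcases strip_last u rfl with ⟨-, a, ha⟩ | ⟨w, a, ha⟩
        · exact ⟨1, a, 1, by simp [← huc, ha], Or.inl rfl⟩
        · exact ⟨1, a, w.prod, by simp [← huc, ha], Or.inr ⟨w, rfl⟩⟩
      | true =>
        exact ⟨1, 1, c, by simp, Or.inr ⟨u, huc.symm⟩⟩
    | true =>
      rcases strip_head u rfl with ⟨hj, b, hb⟩ | ⟨b, w, hb⟩
      · exact ⟨b, 1, 1, by simp [← huc, hb], Or.inl rfl⟩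
      · cases j with
        | true =>
          exact ⟨b, 1, w.prod, by simp [← huc, hb], Or.inr ⟨w, rfl⟩⟩
        | false =>
          rcases strip_last w rfl with ⟨-, a, ha⟩ | ⟨w', a, ha⟩
          · exact ⟨b, a, 1, by simp [← huc, hb, ha], Or.inl rfl⟩
          · exact ⟨b, a, w'.prod, by rw [← huc, hb, ha, mul_assoc], Or.inr ⟨w', rfl⟩⟩

/-- The generating set `{of a} ∪ {d⁻¹ (of b) d}`. -/
def S (d : CoprodI H) : Set (CoprodI H) :=
  Set.range (of : H false →* CoprodI H) ∪
    Set.range (fun b : H true => d⁻¹ * of b * d)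

/-- The invariant set of "normal forms". -/
inductive IsZ (d : CoprodI H) : CoprodI H → Prop
  | base (b : H true) (a : H false) (hb : b ≠ 1) :
      IsZ d (d⁻¹ * of b * d * of a)
  | step (b : H true) (a : H false) (z : CoprodI H) (hb : b ≠ 1) (ha : a ≠ 1)
      (hz : IsZ d z) : IsZ d (d⁻¹ * of b * d * (of a * z))

def Y (d : CoprodI H) : Set (CoprodI H) :=
  {g | (∃ a : H false, g = of a) ∨ ∃ (a : H false) (z : CoprodI H), IsZ d z ∧ g = of a * z}

lemma conj_mul (d : CoprodI H) (b1 b2 : H true) (t : CoprodI H) :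
    (d⁻¹ * of b1 * d) * (d⁻¹ * of b2 * d * t) = d⁻¹ * of (b1 * b2) * d * t := by
  rw [map_mul]; group

lemma Y_closed (d : CoprodI H) :
    ∀ x ∈ S d, ∀ y ∈ Y d, x * y ∈ Y d := by
  rintro x (⟨a', rfl⟩ | ⟨b', rfl⟩) y (⟨a, rfl⟩ | ⟨a, z, hz, rfl⟩)
  · exact Or.inl ⟨a' * a, by rw [map_mul]⟩
  · exact Or.inr ⟨a' * a, z, hz, by rw [map_mul, mul_assoc]⟩
  · by_cases hb' : b' = 1
    · exact Or.inl ⟨a, by simp [hb']⟩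
    · exact Or.inr ⟨1, _, IsZ.base b' a hb', by simp [mul_assoc]⟩
  · by_cases hb' : b' = 1
    · exact Or.inr ⟨a, z, hz, by simp [hb']⟩
    · by_cases ha : a = 1
      · subst ha
        rw [map_one, one_mul]
        cases hz with
        | base b a2 hb =>
          by_cases hbb : b' * b = 1
          · refine Or.inl ⟨a2, ?_⟩
            rw [conj_mul, hbb, map_one]
            group
          · exact Or.inr ⟨1, _, IsZ.base (b' * b) a2 hbb, by
              rw [conj_mul]; simp⟩
        | step b a2 z' hb ha2 hz' =>
          by_cases hbb : b' * b = 1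
          · refine Or.inr ⟨a2, z', hz', ?_⟩
            rw [conj_mul, hbb, map_one]
            group
          · exact Or.inr ⟨1, _, IsZ.step (b' * b) a2 z' hbb ha2 hz', by
              rw [conj_mul]; simp⟩
      · exact Or.inr ⟨1, _, IsZ.step b' a z hb' ha hz, by simp [mul_assoc]⟩

lemma S_inv (d : CoprodI H) {x : CoprodI H} (hx : x ∈ S d) : x⁻¹ ∈ S d := by
  rcases hx with ⟨a, rfl⟩ | ⟨b, rfl⟩
  · exact Or.inl ⟨a⁻¹, by rw [map_inv]⟩
  · refine Or.inr ⟨b⁻¹, ?_⟩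
    show d⁻¹ * of b⁻¹ * d = (d⁻¹ * of b * d)⁻¹
    rw [map_inv]; group

lemma closure_subset_Y (d : CoprodI H) {x : CoprodI H}
    (hx : x ∈ Subgroup.closure (S d)) : x ∈ Y d := by
  induction hx using Subgroup.closure_induction_left with
  | one => exact Or.inl ⟨1, by simp⟩
  | mul_left x hxs y hy ih => exact Y_closed d x hxs y ih
  | inv_mul_cancel x hxs y hy ih => exact Y_closed d x⁻¹ (S_inv d hxs) y ih


lemma neword_toList_eq {i j i' j' : Bool} (u : NeWord H i j) (v : NeWord H i' j')
    (h : u.prod = v.prod) : u.toList = v.toList := by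
  classical
  have h2 : u.toWord = v.toWord := (Word.equiv (M := H)).symm.injective h
  have h3 : u.toWord.toList = v.toWord.toList := by rw [h2]
  exact h3

lemma isZ_prod {d : CoprodI H} (w : NeWord H false true) (hd : d = w.prod)
    {z : CoprodI H} (hz : IsZ d z) :
    ∃ (j : Bool) (u : NeWord H true j), z = u.prod ∧ 2 ≤ u.toList.length := by
  induction hz with
  | base b a hb =>
    by_cases ha : a = 1
    · refine ⟨true, NeWord.append (NeWord.append w.inv (by decide) (NeWord.singleton b hb))
        (by decide) w, ?_, ?_⟩
      · simp [NeWord.append_prod, hd, ha, mul_assoc]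
      · simp only [NeWord.toList, List.length_append, List.length_singleton]
        have : 1 ≤ w.toList.length := List.length_pos_iff.mpr w.toList_ne_nil
        omega
    · refine ⟨false, NeWord.append (NeWord.append (NeWord.append w.inv (by decide)
        (NeWord.singleton b hb)) (by decide) w) (by decide) (NeWord.singleton a ha), ?_, ?_⟩
      · simp [NeWord.append_prod, hd, mul_assoc]
      · simp only [NeWord.toList, List.length_append, List.length_singleton]
        omega
  | step b a z' hb ha hz' ih =>
    obtain ⟨j, u', hz'eq, hlen⟩ := ih
    refine ⟨j, NeWord.append (NeWord.append (NeWord.append w.inv (by decide)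
      (NeWord.singleton b hb)) (by decide) w) (by decide)
      (NeWord.append (NeWord.singleton a ha) (by decide) u'), ?_, ?_⟩
    · simp [NeWord.append_prod, hd, hz'eq, mul_assoc]
    · simp only [NeWord.toList, List.length_append, List.length_singleton]
      omega

lemma not_top {d : CoprodI H} (w : NeWord H false true) (hd : d = w.prod) :
    Subgroup.closure (S d) ≠ ⊤ := by
  intro htop
  have hnil := w.toList_ne_nil
  have hb : (w.last : H true) ≠ 1 := by
    have h1 := w.toList_getLast?
    rw [List.getLast?_eq_getLast_of_ne_nil hnil] at h1
    have h2 : w.toList.getLast hnil = ⟨true, w.last⟩ := Option.some.inj h1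
    have hmem : (⟨true, w.last⟩ : Σ i, H i) ∈ w.toList := h2 ▸ List.getLast_mem hnil
    exact w.toWord.ne_one _ hmem
  have hy : of w.last ∈ Y d := closure_subset_Y d (htop ▸ Subgroup.mem_top _)
  rcases hy with ⟨a, ha⟩ | ⟨a, z, hz, heq⟩
  · have h5 : (CoprodI.lift (fun i => Bool.rec (motive := fun i => H i →* H true)
        1 (MonoidHom.id (H true)) i)) (of w.last) =
        (CoprodI.lift (fun i => Bool.rec (motive := fun i => H i →* H true)
        1 (MonoidHom.id (H true)) i)) (of a) := by rw [ha]
    rw [CoprodI.lift_of, CoprodI.lift_of] at h5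
    exact hb (by simpa using h5)
  · obtain ⟨j, u, rfl, hlen⟩ := isZ_prod w hd hz
    by_cases haa : a = 1
    · rw [haa, map_one, one_mul] at heq
      have h2 : (NeWord.singleton w.last hb).prod = u.prod := by
        rw [NeWord.prod_singleton]; exact heq
      have h3 := congrArg List.length (neword_toList_eq _ _ h2)
      simp only [NeWord.toList, List.length_singleton] at h3
      omega
    · have h2 : (NeWord.singleton w.last hb).prod =
          (NeWord.append (NeWord.singleton a haa) (by decide) u).prod := by
        rw [NeWord.prod_singleton, NeWord.append_prod, NeWord.prod_singleton]; exact heq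
      have h3 := congrArg List.length (neword_toList_eq _ _ h2)
      simp only [NeWord.toList, List.length_append, List.length_singleton] at h3
      omega

/-- The key lemma: if `{of a} ∪ {c⁻¹ (of b) c}` generates the whole binary free
product, then `c = of b * of a` for some `b`, `a`. -/
lemma key (c : CoprodI H) (h : Subgroup.closure (S c) = ⊤) :
    ∃ (b : H true) (a : H false), c = of b * of a := by
  obtain ⟨b₀, a₀, d, hc, hd⟩ := decomp c
  have h2 : Subgroup.closure (S d) = ⊤ := by
    rw [eq_top_iff, ← h]
    rw [Subgroup.closure_le]
    rintro x (⟨a, rfl⟩ | ⟨b, rfl⟩)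
    · exact Subgroup.subset_closure (Or.inl ⟨a, rfl⟩)
    · have hx : c⁻¹ * of b * c =
          of a₀⁻¹ * (d⁻¹ * of (b₀⁻¹ * b * b₀) * d) * of a₀ := by
        rw [hc]
        simp only [map_mul, map_inv]
        group
      show c⁻¹ * of b * c ∈ _
      rw [hx]
      refine mul_mem (mul_mem ?_ ?_) ?_
      · exact Subgroup.subset_closure (Or.inl ⟨a₀⁻¹, by rw [map_inv]⟩)
      · exact Subgroup.subset_closure (Or.inr ⟨b₀⁻¹ * b * b₀, rfl⟩)
      · exact Subgroup.subset_closure (Or.inl ⟨a₀, rfl⟩)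
  rcases hd with rfl | ⟨w, hw⟩
  · exact ⟨b₀, a₀, by simpa using hc⟩
  · exact absurd h2 (not_top w hw)

end MKSAux



namespace MKSAux

/-- The two-group family indexed by `Bool`. -/
abbrev HH (r₁ r₂ : ℕ) : Bool → Type := fun i => Multiplicative (ZMod (Bool.rec r₁ r₂ i))

noncomputable def phi (r₁ r₂ : ℕ) : Monoid.Coprod (C r₁) (C r₂) →* Monoid.CoprodI (HH r₁ r₂) :=
  Monoid.Coprod.lift (CoprodI.of (M := HH r₁ r₂) (i := false)) (CoprodI.of (M := HH r₁ r₂) (i := true))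

noncomputable def psi (r₁ r₂ : ℕ) : Monoid.CoprodI (HH r₁ r₂) →* Monoid.Coprod (C r₁) (C r₂) :=
  CoprodI.lift (fun i => Bool.rec
    (motive := fun i => HH r₁ r₂ i →* Monoid.Coprod (C r₁) (C r₂))
    Monoid.Coprod.inl Monoid.Coprod.inr i)

lemma psi_phi (r₁ r₂ : ℕ) (x : Monoid.Coprod (C r₁) (C r₂)) : psi r₁ r₂ (phi r₁ r₂ x) = x := by
  have h : (psi r₁ r₂).comp (phi r₁ r₂) = MonoidHom.id _ := by
    apply Monoid.Coprod.hom_ext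
    · ext y
      simp [phi, psi, Monoid.Coprod.lift_apply_inl, CoprodI.lift_of]
    · ext y
      simp [phi, psi, Monoid.Coprod.lift_apply_inr, CoprodI.lift_of]
  exact DFunLike.congr_fun h x

lemma phi_psi (r₁ r₂ : ℕ) (y : Monoid.CoprodI (HH r₁ r₂)) : phi r₁ r₂ (psi r₁ r₂ y) = y := by
  have h : (phi r₁ r₂).comp (psi r₁ r₂) = MonoidHom.id _ := by
    apply CoprodI.ext_hom
    intro i
    cases i with
    | false =>
      ext y
      simp [phi, psi, Monoid.Coprod.lift_apply_inl, CoprodI.lift_of]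
    | true =>
      ext y
      simp [phi, psi, Monoid.Coprod.lift_apply_inr, CoprodI.lift_of]
  exact DFunLike.congr_fun h y

end MKSAux

/-- The generation exercise (Magnus–Karrass–Solitar, Exercise 15, p. 194): if
`{t₁, c⁻¹ t₂ c}` generates the free product `C r₁ ∗ C r₂`, then `c = t₂^s t₁^t`
for some integers `s, t`. -/
theorem generating_pair_forces_form_of_conjugator
    (r₁ r₂ : ℕ) (hr₁ : 2 ≤ r₁) (hr₂ : 2 ≤ r₂) (hr : Nat.gcd r₁ r₂ = 1)
    (c : Monoid.Coprod (C r₁) (C r₂))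
    (h : Subgroup.closure
        {(Monoid.Coprod.inl (Multiplicative.ofAdd (1 : ZMod r₁)) :
            Monoid.Coprod (C r₁) (C r₂)),
         c⁻¹ * Monoid.Coprod.inr (Multiplicative.ofAdd (1 : ZMod r₂)) * c} = ⊤) :
    ∃ s t : ℤ,
      c = (Monoid.Coprod.inr (Multiplicative.ofAdd (1 : ZMod r₂)) :
            Monoid.Coprod (C r₁) (C r₂)) ^ s *
          (Monoid.Coprod.inl (Multiplicative.ofAdd (1 : ZMod r₁)) :
            Monoid.Coprod (C r₁) (C r₂)) ^ t := by
  classical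
  set t₁ : Monoid.Coprod (C r₁) (C r₂) :=
    Monoid.Coprod.inl (Multiplicative.ofAdd (1 : ZMod r₁)) with ht₁
  set t₂ : Monoid.Coprod (C r₁) (C r₂) :=
    Monoid.Coprod.inr (Multiplicative.ofAdd (1 : ZMod r₂)) with ht₂
  have hsurj : Function.Surjective (MKSAux.phi r₁ r₂) :=
    fun y => ⟨MKSAux.psi r₁ r₂ y, MKSAux.phi_psi r₁ r₂ y⟩
  have htop : Subgroup.closure ((MKSAux.phi r₁ r₂) '' {t₁, c⁻¹ * t₂ * c}) = ⊤ := by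
    rw [← MonoidHom.map_closure, h, ← MonoidHom.range_eq_map]
    exact MonoidHom.range_eq_top.2 hsurj
  have hsub : (MKSAux.phi r₁ r₂) '' {t₁, c⁻¹ * t₂ * c} ⊆
      MKSAux.S (MKSAux.phi r₁ r₂ c) := by
    rintro _ ⟨x, hx, rfl⟩
    rcases hx with rfl | rfl
    · refine Or.inl ⟨Multiplicative.ofAdd (1 : ZMod r₁), ?_⟩
      simp only [ht₁, MKSAux.phi, Monoid.Coprod.lift_apply_inl]
    · refine Or.inr ⟨Multiplicative.ofAdd (1 : ZMod r₂), ?_⟩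
      simp only [map_mul, map_inv, ht₂, MKSAux.phi, Monoid.Coprod.lift_apply_inr]
  have hS : Subgroup.closure (MKSAux.S (MKSAux.phi r₁ r₂ c)) = ⊤ := by
    rw [eq_top_iff, ← htop]
    exact Subgroup.closure_mono hsub
  obtain ⟨b, a, hba⟩ := MKSAux.key (MKSAux.phi r₁ r₂ c) hS
  have hinrb : MKSAux.psi r₁ r₂ (Monoid.CoprodI.of b) = Monoid.Coprod.inr b := by
    show MKSAux.psi r₁ r₂ (Monoid.CoprodI.of (M := MKSAux.HH r₁ r₂) (i := true) b) = _
    simp only [MKSAux.psi, Monoid.CoprodI.lift_of]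
  have hinla : MKSAux.psi r₁ r₂ (Monoid.CoprodI.of a) = Monoid.Coprod.inl a := by
    show MKSAux.psi r₁ r₂ (Monoid.CoprodI.of (M := MKSAux.HH r₁ r₂) (i := false) a) = _
    simp only [MKSAux.psi, Monoid.CoprodI.lift_of]
  have hc : c = Monoid.Coprod.inr b * Monoid.Coprod.inl a := by
    have h2 := congrArg (MKSAux.psi r₁ r₂) hba
    rw [MKSAux.psi_phi, map_mul, hinrb, hinla] at h2
    exact h2
  obtain ⟨s, hs⟩ := ZMod.intCast_surjective (Multiplicative.toAdd b)
  obtain ⟨t, ht⟩ := ZMod.intCast_surjective (Multiplicative.toAdd a)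
  have hb' : (Multiplicative.ofAdd (1 : ZMod r₂)) ^ s = b := by
    apply Multiplicative.toAdd.injective
    rw [toAdd_zpow, toAdd_ofAdd, zsmul_eq_mul, mul_one]
    exact hs
  have ha' : (Multiplicative.ofAdd (1 : ZMod r₁)) ^ t = a := by
    apply Multiplicative.toAdd.injective
    rw [toAdd_zpow, toAdd_ofAdd, zsmul_eq_mul, mul_one]
    exact ht
  refine ⟨s, t, ?_⟩
  rw [hc, ht₁, ht₂,
    ← map_zpow (Monoid.Coprod.inr : C r₂ →* Monoid.Coprod (C r₁) (C r₂)),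
    ← map_zpow (Monoid.Coprod.inl : C r₁ →* Monoid.Coprod (C r₁) (C r₂)), hb', ha']
end

section
/- Let p₁, p₂ ≥ 2 with gcd(p₁,p₂) = 1 and r₁, r₂ ≥ 2 with gcd(r₁,r₂) = 1. If there exists a surjective group homomorphism from the torus-knot group G(p₁,p₂) = ⟨u, v ∣ u^{p₁} = v^{p₂}⟩ onto G(r₁,r₂) = ⟨a, b ∣ a^{r₁} = b^{r₂}⟩, then min(r₁(r₂−1), r₂(r₁−1)) ≤ min(p₁(p₂−1), p₂(p₁−1)). (Corollary 3.3: if k is a torus knot and k ≥ k′, then the crossing number of k is no less than that of k′, since by Murasugi the crossing number of a (p,q)-torus knot is min{p(q−1), q(p−1)}.) -/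
set_option linter.unusedSectionVars false
set_option linter.unusedVariables false
set_option maxHeartbeats 1000000

namespace TorusCor

open Monoid Monoid.CoprodI

variable {ι : Type*} {G : ι → Type*} [∀ i, Group (G i)]

/-- Product of the letters of a list. -/
def P (L : List (Σ i, G i)) : CoprodI G := (L.map fun z => CoprodI.of z.2).prod

theorem P_append (L₁ L₂ : List (Σ i, G i)) : P (L₁ ++ L₂) = P L₁ * P L₂ := by
  simp [P]

theorem P_cons (z : Σ i, G i) (L : List (Σ i, G i)) : P (z :: L) = CoprodI.of z.2 * P L := by
  simp [P]

theorem P_singleton (z : Σ i, G i) : P [z] = CoprodI.of z.2 := by simp [P]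

theorem word_prod_eq_P (w : Word G) : w.prod = P w.toList := rfl

theorem neword_prod_eq_P {i j} (w : NeWord G i j) : w.prod = P w.toList := rfl

theorem neword_prod_toWord {i j} (w : NeWord G i j) : w.toWord.prod = w.prod := rfl

variable [DecidableEq ι] [∀ i, DecidableEq (G i)]

theorem word_prod_injective : Function.Injective (Word.prod : Word G → CoprodI G) :=
  Word.equiv.symm.injective

theorem neword_prod_ne_one {i j} (w : NeWord G i j) : w.prod ≠ 1 := by
  intro h
  have h2 : w.toWord = Word.empty := word_prod_injective (by rw [← NeWord.prod, h]; rfl)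
  exact w.toList_ne_nil (congrArg Word.toList h2)

theorem equiv_prod (g : CoprodI G) : (Word.equiv g).prod = g := Word.equiv.left_inv g

theorem equiv_of_prod (w : Word G) : Word.equiv w.prod = w := Word.equiv.right_inv w

/-- Powers of a cyclically reduced word. -/
def powWord {i j} (hij : j ≠ i) (w : NeWord G i j) : ℕ → NeWord G i j
  | 0 => w
  | n+1 => NeWord.append w hij (powWord hij w n)

theorem powWord_prod {i j} (hij : j ≠ i) (w : NeWord G i j) (n : ℕ) :
    (powWord hij w n).prod = w.prod ^ (n + 1) := by
  induction n with
  | zero => simp [powWord]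
  | succ n ih => rw [powWord, NeWord.append_prod, ih, ← pow_succ']

theorem pow_ne_one_of_cyc_red {i j} (hij : j ≠ i) (w : NeWord G i j) {n : ℕ} (hn : n ≠ 0) :
    w.prod ^ n ≠ 1 := by
  obtain ⟨m, rfl⟩ := Nat.exists_eq_succ_of_ne_zero hn
  rw [← powWord_prod hij w m]
  exact neword_prod_ne_one _

/-- Any torsion element of a free product is conjugate to a letter. -/
theorem conj_letter_of_pow_eq_one {n : ℕ} (hn : n ≠ 0) (g : CoprodI G) (hg : g ^ n = 1) :
    g = 1 ∨ ∃ (i : ι) (a : G i) (c : CoprodI G), g = c * CoprodI.of a * c⁻¹ := by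
  suffices H : ∀ (N : ℕ) (g : CoprodI G), (Word.equiv g).toList.length ≤ N → g ^ n = 1 →
      g = 1 ∨ ∃ (i : ι) (a : G i) (c : CoprodI G), g = c * CoprodI.of a * c⁻¹ from
    H _ g le_rfl hg
  clear hg g
  intro N
  induction N with
  | zero =>
    intro g hlen _
    left
    have h0 : (Word.equiv g).toList = [] := List.length_eq_zero_iff.mp (Nat.le_zero.mp hlen)
    rw [← equiv_prod g, word_prod_eq_P, h0]
    rfl
  | succ N IH =>
    intro g hlen hg
    by_cases hg1 : g = 1
    · exact Or.inl hg1
    have hwne : Word.equiv g ≠ Word.empty := by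
      intro h
      exact hg1 (by rw [← equiv_prod g, h, Word.prod_empty])
    obtain ⟨i', j', w', hw'⟩ := NeWord.of_word _ hwne
    set l := w'.toList with hldef
    have hlw : (Word.equiv g).toList = l := by rw [← hw']; rfl
    have hgp : w'.prod = g := by
      show w'.toWord.prod = g
      rw [hw', equiv_prod]
    have hlne : l ≠ [] := w'.toList_ne_nil
    have hlenl : l.length ≤ N + 1 := by rw [← hlw]; exact hlen
    have hPl : g = P l := by rw [← hgp, neword_prod_eq_P]
    -- head of l
    have hhead : l.head hlne = ⟨i', w'.head⟩ := by
      have := w'.toList_head?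
      rw [List.head?_eq_head hlne] at this
      exact Option.some.inj this
    have hcons : l = ⟨i', w'.head⟩ :: l.tail := by
      conv_lhs => rw [← List.cons_head_tail hlne, hhead]
    by_cases htail : l.tail = []
    · -- singleton word : g is a letter
      refine Or.inr ⟨i', w'.head, 1, ?_⟩
      rw [hPl, hcons, htail, P_cons]
      simp [P]
    · by_cases hij : i' = j'
      · subst hij
        -- the word starts and ends with the same index i'
        obtain ⟨l₀, hl₀⟩ : ∃ l₀, l = l₀ ++ [⟨i', w'.last⟩] := by
          have := w'.toList_getLast?
          exact List.getLast?_eq_some_iff.mp this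
        set a := w'.head with hadef
        set b := w'.last with hbdef
        obtain ⟨z, u, rfl⟩ : ∃ z u, l₀ = z :: u := by
          cases l₀ with
          | nil =>
            exfalso
            rw [hl₀] at htail
            simp at htail
          | cons z u => exact ⟨z, u, rfl⟩
        rw [List.cons_append] at hl₀
        have hz : z = ⟨i', a⟩ := by
          have h2 := hcons
          rw [hl₀] at h2
          injection h2 with h3 h4
        subst hz
        have hgeq : g = CoprodI.of a * (P u * CoprodI.of b) := by
          rw [hPl, hl₀, P_cons, P_append, P_singleton]
        set h' := (CoprodI.of a)⁻¹ * g * CoprodI.of a with hh'def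
        have hh' : h' = P u * CoprodI.of (b * a) := by
          rw [hh'def, hgeq, inv_mul_cancel_left, mul_assoc, ← MonoidHom.map_mul]
        have hpow : h' ^ n = 1 := by
          have h2 := conj_pow (a := (CoprodI.of a)⁻¹) (b := g) (i := n)
          rw [inv_inv] at h2
          rw [hh'def, h2, hg, mul_one, inv_mul_cancel]
        have hconj : g = CoprodI.of a * h' * (CoprodI.of a)⁻¹ := by
          rw [hh'def]; group
        have hchain : l.Chain' (fun x y => x.1 ≠ y.1) := w'.toWord.chain_ne
        have hne1 : ∀ z' ∈ l, z'.2 ≠ 1 := w'.toWord.ne_one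
        rw [hl₀] at hchain
        have htl : (u ++ [(⟨i', b⟩ : Σ i, G i)]).Chain' (fun x y => x.1 ≠ y.1) := hchain.tail
        obtain ⟨cu, -, cjun⟩ := List.isChain_append.mp htl
        have humem : ∀ z' ∈ u, z' ∈ l := by
          intro z' hz'
          rw [hl₀]
          simp [hz']
        have hlul : l.length = u.length + 2 := by rw [hl₀]; simp
        by_cases hba : b * a = 1
        · set W : Word G := ⟨u, fun z' hz' => hne1 z' (humem z' hz'), cu⟩ with hWdef
          have hWp : W.prod = h' := by
            rw [word_prod_eq_P, hh', hba, MonoidHom.map_one, mul_one]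
          have hlen' : (Word.equiv h').toList.length ≤ N := by
            rw [← hWp, equiv_of_prod]
            show u.length ≤ N
            omega
          rcases IH h' hlen' hpow with h1 | ⟨i0, a0, c0, hc0⟩
          · left; rw [hconj, h1, mul_one, mul_inv_cancel]
          · right
            exact ⟨i0, a0, CoprodI.of a * c0, by rw [hconj, hc0]; group⟩
        · have hjun : ∀ x ∈ u.getLast?, ∀ y ∈ ([(⟨i', b * a⟩ : Σ i, G i)]).head?, x.1 ≠ y.1 := by
            intro x hx y hy
            simp only [List.head?_cons, Option.mem_some_iff] at hy
            subst hy
            exact cjun x hx ⟨i', b⟩ rfl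
          have hchainW : (u ++ [(⟨i', b * a⟩ : Σ i, G i)]).IsChain (fun x y => x.1 ≠ y.1) :=
            List.isChain_append.mpr ⟨cu, List.isChain_singleton _, hjun⟩
          have hne1W : ∀ z' ∈ u ++ [⟨i', b * a⟩], z'.2 ≠ 1 := by
            intro z' hz'
            rcases List.mem_append.mp hz' with h2 | h2
            · exact hne1 z' (humem z' h2)
            · simp only [List.mem_singleton] at h2
              subst h2
              exact hba
          set W : Word G := ⟨u ++ [⟨i', b * a⟩], hne1W, hchainW⟩ with hWdef
          have hWp : W.prod = h' := by
            rw [word_prod_eq_P]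
            show P (u ++ [⟨i', b * a⟩]) = h'
            rw [P_append, P_singleton, hh']
          have hlen' : (Word.equiv h').toList.length ≤ N := by
            rw [← hWp, equiv_of_prod]
            show (u ++ [(⟨i', b * a⟩ : Σ i, G i)]).length ≤ N
            simp only [List.length_append, List.length_cons, List.length_nil]
            omega
          rcases IH h' hlen' hpow with h1 | ⟨i0, a0, c0, hc0⟩
          · left; rw [hconj, h1, mul_one, mul_inv_cancel]
          · right
            exact ⟨i0, a0, CoprodI.of a * c0, by rw [hconj, hc0]; group⟩
      · -- cyclically reduced: contradiction
        exfalso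
        rw [← hgp] at hg
        exact pow_ne_one_of_cyc_red (fun h => hij h.symm) w' hn hg


theorem replaceHead_length : ∀ {i j} (w : NeWord G i j) (x : G i) (h : x ≠ 1),
    (NeWord.replaceHead x h w).toList.length = w.toList.length := by
  intro i j w
  induction w with
  | singleton y hy => intro x h; rfl
  | append w₁ hne w₂ ih₁ ih₂ =>
    intro x h
    show ((NeWord.replaceHead x h w₁).toList ++ w₂.toList).length = _
    simp [ih₁]

/-- The free product of two nontrivial groups has trivial centre. -/
theorem central_eq_one {H : Bool → Type*} [∀ b, Group (H b)] [∀ b, Nontrivial (H b)]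
    [∀ b, DecidableEq (H b)] (g : CoprodI H) (hc : ∀ x, g * x = x * g) : g = 1 := by
  by_contra hg1
  have hwne : Word.equiv g ≠ Word.empty := fun h =>
    hg1 (by rw [← equiv_prod g, h, Word.prod_empty])
  obtain ⟨i, j, w', hw'⟩ := NeWord.of_word _ hwne
  have hgp : w'.prod = g := by
    show w'.toWord.prod = g
    rw [hw', equiv_prod]
  set l := w'.toList with hldef
  have hlne : l ≠ [] := w'.toList_ne_nil
  obtain ⟨c, hcne⟩ := exists_ne (1 : H (!j))
  have hjk : j ≠ !j := by simp
  have E1 : g * CoprodI.of c = (w'.append hjk (NeWord.singleton c hcne)).prod := by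
    rw [NeWord.append_prod, NeWord.prod_singleton, hgp]
  have hcg : CoprodI.of c * g = g * CoprodI.of c := (hc (CoprodI.of c)).symm
  by_cases hki : (!j) = i
  · subst hki
    by_cases hch : c * w'.head = 1
    · -- cancellation case
      have hhead : l.head hlne = ⟨!j, w'.head⟩ := by
        have h2 := w'.toList_head?
        rw [List.head?_eq_head hlne] at h2
        exact Option.some.inj h2
      have hcons : l = ⟨!j, w'.head⟩ :: l.tail := by
        conv_lhs => rw [← List.cons_head_tail hlne, hhead]
      have hPg : g = P l := by rw [← hgp, neword_prod_eq_P]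
      have hPl2 : P l = CoprodI.of w'.head * P l.tail := by
        conv_lhs => rw [hcons, P_cons]
      have hLHS : CoprodI.of c * g = P l.tail := by
        rw [hPg, hPl2, ← mul_assoc, ← MonoidHom.map_mul, hch, MonoidHom.map_one, one_mul]
      have hmem : ∀ z ∈ l.tail, z.2 ≠ 1 := fun z hz =>
        w'.toWord.ne_one z (List.mem_of_mem_tail hz)
      have hchain : l.tail.Chain' (fun x y => x.1 ≠ y.1) := w'.toWord.chain_ne.tail
      set W : Word H := ⟨l.tail, hmem, hchain⟩ with hWdef
      have hWp : W.prod = CoprodI.of c * g := by rw [word_prod_eq_P, hLHS]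
      have heq : (w'.append hjk (NeWord.singleton c hcne)).toWord = W :=
        word_prod_injective (by rw [neword_prod_toWord, ← E1, hWp]; exact hcg.symm)
      have hlist := congrArg (fun w : Word H => w.toList.length) heq
      simp only [hWdef] at hlist
      have : (l ++ [(⟨!j, c⟩ : Σ b, H b)]).length = l.tail.length := hlist
      rw [List.length_append, List.length_tail] at this
      have := List.length_pos_iff.mpr hlne
      omega
    · -- no-cancellation case
      have E2 : CoprodI.of c * g = (w'.mulHead c hch).prod := by
        rw [NeWord.mulHead_prod, hgp]
      have heq : (w'.append hjk (NeWord.singleton c hcne)).toWord = (w'.mulHead c hch).toWord :=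
        word_prod_injective (by
          rw [neword_prod_toWord, neword_prod_toWord, ← E1, ← E2]; exact hcg.symm)
      have hlist := congrArg (fun w : Word H => w.toList.length) heq
      have h3 : (l ++ [(⟨!j, c⟩ : Σ b, H b)]).length = (w'.mulHead c hch).toList.length := hlist
      rw [NeWord.mulHead] at h3
      rw [replaceHead_length] at h3
      rw [List.length_append] at h3
      simp at h3
      rw [← hldef] at h3
      omega
  · -- the letter index differs from the head index
    have hki' : (!j) ≠ i := hki
    have E2 : CoprodI.of c * g = ((NeWord.singleton c hcne).append hki' w').prod := by
      rw [NeWord.append_prod, NeWord.prod_singleton, hgp]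
    have heq : (w'.append hjk (NeWord.singleton c hcne)).toWord
        = ((NeWord.singleton c hcne).append hki' w').toWord :=
      word_prod_injective (by
        rw [neword_prod_toWord, neword_prod_toWord, ← E1, ← E2]; exact hcg.symm)
    have hlist := congrArg Word.toList heq
    have h3 : l ++ [(⟨!j, c⟩ : Σ b, H b)] = ⟨!j, c⟩ :: l := hlist
    have h4 : (l ++ [(⟨!j, c⟩ : Σ b, H b)]).head? = some ⟨i, w'.head⟩ := by
      rw [List.head?_append_of_ne_nil _ hlne]
      exact w'.toList_head?
    rw [h3] at h4
    simp only [List.head?_cons, Option.some.injEq] at h4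
    exact hki (congrArg Sigma.fst h4)

section Assembly

open Monoid

/-- The pair of cyclic groups `ℤ/r₁`, `ℤ/r₂` as a `Bool`-indexed family. -/
abbrev Fam (r₁ r₂ : ℕ) : Bool → Type := fun b => Multiplicative (ZMod (cond b r₁ r₂))

/-- In the torus knot group, `x^p = y^q`. -/
theorem rel_holds (p q : ℕ) :
    (PresentedGroup.of true : _root_.G p q) ^ p = PresentedGroup.of false ^ q := by
  have hmem : (FreeGroup.of true ^ p * (FreeGroup.of false ^ q)⁻¹ : FreeGroup Bool) ∈
      Subgroup.normalClosure (torusRel p q) :=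
    Subgroup.subset_normalClosure rfl
  have h1 : PresentedGroup.mk (torusRel p q)
      (FreeGroup.of true ^ p * (FreeGroup.of false ^ q)⁻¹) = 1 :=
    (QuotientGroup.eq_one_iff _).mpr hmem
  rw [map_mul, map_inv, map_pow, map_pow, mul_inv_eq_one] at h1
  exact h1

/-- `x^p` is central in the torus knot group. -/
theorem central_pow (p q : ℕ) (g : _root_.G p q) :
    (PresentedGroup.of true : _root_.G p q) ^ p * g = g * (PresentedGroup.of true : _root_.G p q) ^ p := by
  set z : _root_.G p q := (PresentedGroup.of true : _root_.G p q) ^ p with hz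
  have hmem : g ∈ Subgroup.centralizer {z} := by
    refine PresentedGroup.generated_by _ _ ?_ g
    intro b
    rw [Subgroup.mem_centralizer_iff]
    rintro h ⟨rfl⟩
    cases b
    · -- b = false : z = y ^ q commutes with y
      rw [hz, rel_holds p q]
      exact (Commute.self_pow _ _).symm.eq
    · -- b = true
      rw [hz]
      exact (Commute.self_pow _ _).symm.eq
  exact Subgroup.mem_centralizer_iff.mp hmem z rfl

/-- The natural surjection from the torus knot group onto `ℤ/r₁ * ℤ/r₂`. -/
noncomputable def pr (r₁ r₂ : ℕ) : _root_.G r₁ r₂ →* CoprodI (Fam r₁ r₂) :=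
  PresentedGroup.toGroup
    (f := fun b => CoprodI.of (M := Fam r₁ r₂) (i := b) (Multiplicative.ofAdd (1 : ZMod (cond b r₁ r₂))))
    (by
      rintro r rfl
      have h1 : (CoprodI.of (M := Fam r₁ r₂) (i := true)
          (Multiplicative.ofAdd (1 : ZMod (cond true r₁ r₂)))) ^ r₁ = 1 := by
        have h0 : (Multiplicative.ofAdd (1 : ZMod (cond true r₁ r₂))) ^ r₁ = 1 := by
          show (Multiplicative.ofAdd (1 : ZMod r₁)) ^ r₁ = 1
          rw [← ofAdd_nsmul]
          simp [nsmul_eq_mul]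
        rw [← map_pow CoprodI.of, h0, map_one]
      have h2 : (CoprodI.of (M := Fam r₁ r₂) (i := false)
          (Multiplicative.ofAdd (1 : ZMod (cond false r₁ r₂)))) ^ r₂ = 1 := by
        have h0 : (Multiplicative.ofAdd (1 : ZMod (cond false r₁ r₂))) ^ r₂ = 1 := by
          show (Multiplicative.ofAdd (1 : ZMod r₂)) ^ r₂ = 1
          rw [← ofAdd_nsmul]
          simp [nsmul_eq_mul]
        rw [← map_pow CoprodI.of, h0, map_one]
      rw [map_mul, map_inv, map_pow, map_pow, FreeGroup.lift_apply_of, FreeGroup.lift_apply_of, h1, h2]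
      simp)

theorem pr_of (r₁ r₂ : ℕ) (b : Bool) :
    pr r₁ r₂ (PresentedGroup.of b)
      = CoprodI.of (M := Fam r₁ r₂) (i := b) (Multiplicative.ofAdd (1 : ZMod (cond b r₁ r₂))) := by
  simp [pr, PresentedGroup.toGroup.of]

theorem pr_surjective (r₁ r₂ : ℕ) (h₁ : 2 ≤ r₁) (h₂ : 2 ≤ r₂) :
    Function.Surjective (pr r₁ r₂) := by
  intro x
  induction x using CoprodI.induction_on with
  | one => exact ⟨1, map_one _⟩
  | of b m =>
    haveI : NeZero (cond b r₁ r₂) := ⟨by cases b <;> simp <;> omega⟩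
    refine ⟨(PresentedGroup.of b) ^ (Multiplicative.toAdd m).val, ?_⟩
    rw [map_pow, pr_of, ← map_pow]
    congr 1
    rw [← ofAdd_nsmul]
    simp [nsmul_eq_mul, ZMod.natCast_val, ZMod.cast_id]
  | mul x y hx hy =>
    obtain ⟨gx, hgx⟩ := hx
    obtain ⟨gy, hgy⟩ := hy
    exact ⟨gx * gy, by rw [map_mul, hgx, hgy]⟩

theorem key_dvd (p₁ p₂ r₁ r₂ : ℕ) (hp₁ : 2 ≤ p₁) (hp₂ : 2 ≤ p₂) (hr₁ : 2 ≤ r₁) (hr₂ : 2 ≤ r₂)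
    (hp : Nat.gcd p₁ p₂ = 1) (hr : Nat.gcd r₁ r₂ = 1)
    (φ : _root_.G p₁ p₂ →* _root_.G r₁ r₂) (hφ : Function.Surjective φ) :
    (r₁ ∣ p₁ ∧ r₂ ∣ p₂) ∨ (r₁ ∣ p₂ ∧ r₂ ∣ p₁) := by
  haveI : NeZero r₁ := ⟨by omega⟩
  haveI : NeZero r₂ := ⟨by omega⟩
  haveI hnt : ∀ b, Nontrivial (Fam r₁ r₂ b) := by
    intro b
    haveI : Fact (1 < r₁) := ⟨by omega⟩
    haveI : Fact (1 < r₂) := ⟨by omega⟩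
    have hzm : Nontrivial (ZMod (cond b r₁ r₂)) := by
      cases b
      · show Nontrivial (ZMod r₂); exact inferInstance
      · show Nontrivial (ZMod r₁); exact inferInstance
    exact ⟨⟨Multiplicative.ofAdd 0, Multiplicative.ofAdd 1,
      fun hcon => zero_ne_one (Multiplicative.ofAdd.injective hcon)⟩⟩
  set ψ : _root_.G p₁ p₂ →* CoprodI (Fam r₁ r₂) := (pr r₁ r₂).comp φ with hψdef
  have hψ : Function.Surjective ψ := (pr_surjective r₁ r₂ hr₁ hr₂).comp hφ
  set x : _root_.G p₁ p₂ := PresentedGroup.of true with hxdef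
  set y : _root_.G p₁ p₂ := PresentedGroup.of false with hydef
  have hcentral : ∀ q, ψ (x ^ p₁) * q = q * ψ (x ^ p₁) := by
    intro q
    obtain ⟨m, rfl⟩ := hψ q
    rw [← map_mul, ← map_mul, central_pow p₁ p₂ m]
  have h1 : ψ x ^ p₁ = 1 := by
    have h0 := central_eq_one (ψ (x ^ p₁)) hcentral
    rwa [map_pow] at h0
  have h2 : ψ y ^ p₂ = 1 := by
    rw [← map_pow, ← rel_holds p₁ p₂, map_pow, h1]
  set d₁ := orderOf (ψ x) with hd₁def
  set d₂ := orderOf (ψ y) with hd₂def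
  have hd1p : d₁ ∣ p₁ := orderOf_dvd_of_pow_eq_one h1
  have hd2p : d₂ ∣ p₂ := orderOf_dvd_of_pow_eq_one h2
  have hfact : ∀ (g : CoprodI (Fam r₁ r₂)) (n : ℕ), n ≠ 0 → g ^ n = 1 →
      orderOf g ∣ r₁ ∨ orderOf g ∣ r₂ := by
    intro g n hn hgn
    rcases conj_letter_of_pow_eq_one hn g hgn with h | ⟨i, a, c, rfl⟩
    · left; simp [h]
    · have hsc : SemiconjBy c (CoprodI.of a) (c * CoprodI.of a * c⁻¹) := by
        unfold SemiconjBy; group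
      have h3 : orderOf (CoprodI.of (M := Fam r₁ r₂) a) = orderOf (c * CoprodI.of a * c⁻¹) :=
        hsc.orderOf_eq
      have h4 : orderOf a ∣ Nat.card (Fam r₁ r₂ i) := orderOf_dvd_natCard a
      have h5 : Nat.card (Fam r₁ r₂ i) = cond i r₁ r₂ := by
        rw [Nat.card_congr (MulEquiv.toEquiv (MulEquiv.refl _))]
        show Nat.card (Multiplicative (ZMod (cond i r₁ r₂))) = _
        rw [Nat.card_congr Multiplicative.toAdd, Nat.card_zmod]
      rw [← h3, orderOf_injective CoprodI.of (CoprodI.of_injective i) a]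
      rw [h5] at h4
      cases i
      · right; exact h4
      · left; exact h4
  have hd1r : d₁ ∣ r₁ ∨ d₁ ∣ r₂ := hfact (ψ x) p₁ (by omega) h1
  have hd2r : d₂ ∣ r₁ ∨ d₂ ∣ r₂ := hfact (ψ y) p₂ (by omega) h2
  -- the abelianized picture
  set fb : ∀ b, Fam r₁ r₂ b →* Multiplicative (ZMod r₁ × ZMod r₂) := fun b =>
    Bool.rec (AddMonoidHom.toMultiplicative (AddMonoidHom.inr (ZMod r₁) (ZMod r₂)))
             (AddMonoidHom.toMultiplicative (AddMonoidHom.inl (ZMod r₁) (ZMod r₂))) b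
    with hfbdef
  set χ : CoprodI (Fam r₁ r₂) →* Multiplicative (ZMod r₁ × ZMod r₂) := CoprodI.lift fb
    with hχdef
  have hχs : Function.Surjective χ := by
    intro z
    refine ⟨CoprodI.of (M := Fam r₁ r₂) (i := true) (Multiplicative.ofAdd z.toAdd.1) *
            CoprodI.of (M := Fam r₁ r₂) (i := false) (Multiplicative.ofAdd z.toAdd.2), ?_⟩
    rw [map_mul, hχdef, CoprodI.lift_of, CoprodI.lift_of]
    show Multiplicative.ofAdd ((z.toAdd.1 : ZMod r₁), (0 : ZMod r₂)) *
        Multiplicative.ofAdd ((0 : ZMod r₁), (z.toAdd.2 : ZMod r₂)) = z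
    rw [← ofAdd_add]
    show Multiplicative.ofAdd ((z.toAdd.1 + 0, 0 + z.toAdd.2) : ZMod r₁ × ZMod r₂) = z
    rw [add_zero, zero_add]
    rfl
  have hm : ∀ g : _root_.G p₁ p₂, (χ (ψ g)) ^ (d₁ * d₂) = 1 := by
    have hΘ : ((powMonoidHom (d₁ * d₂)).comp (χ.comp ψ) : _root_.G p₁ p₂ →* _) = 1 := by
      apply PresentedGroup.ext
      intro b
      cases b
      · show (χ (ψ y)) ^ (d₁ * d₂) = (1 : _root_.G p₁ p₂ →* _) (PresentedGroup.of false)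
        rw [pow_mul', ← map_pow, pow_orderOf_eq_one, map_one, one_pow]
        rfl
      · show (χ (ψ x)) ^ (d₁ * d₂) = (1 : _root_.G p₁ p₂ →* _) (PresentedGroup.of true)
        rw [pow_mul, ← map_pow, pow_orderOf_eq_one, map_one, one_pow]
        rfl
    intro g
    have := congrArg (fun F : _root_.G p₁ p₂ →* Multiplicative (ZMod r₁ × ZMod r₂) => F g) hΘ
    simpa using this
  have hall : ∀ z : Multiplicative (ZMod r₁ × ZMod r₂), z ^ (d₁ * d₂) = 1 := by
    intro z
    obtain ⟨q, rfl⟩ := hχs z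
    obtain ⟨g, rfl⟩ := hψ q
    exact hm g
  have hr1m : r₁ ∣ d₁ * d₂ := by
    have hz := hall (Multiplicative.ofAdd ((1 : ZMod r₁), (0 : ZMod r₂)))
    rw [← ofAdd_nsmul] at hz
    have hz2 : ((d₁ * d₂) • (((1 : ZMod r₁), (0 : ZMod r₂)) : ZMod r₁ × ZMod r₂)) = 0 :=
      Multiplicative.ofAdd.injective hz
    have hz3 : (d₁ * d₂) • (1 : ZMod r₁) = 0 := congrArg Prod.fst hz2
    rw [nsmul_eq_mul, mul_one] at hz3
    exact (ZMod.natCast_eq_zero_iff _ _).mp hz3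
  have hr2m : r₂ ∣ d₁ * d₂ := by
    have hz := hall (Multiplicative.ofAdd ((0 : ZMod r₁), (1 : ZMod r₂)))
    rw [← ofAdd_nsmul] at hz
    have hz2 : ((d₁ * d₂) • (((0 : ZMod r₁), (1 : ZMod r₂)) : ZMod r₁ × ZMod r₂)) = 0 :=
      Multiplicative.ofAdd.injective hz
    have hz3 : (d₁ * d₂) • (1 : ZMod r₂) = 0 := congrArg Prod.snd hz2
    rw [nsmul_eq_mul, mul_one] at hz3
    exact (ZMod.natCast_eq_zero_iff _ _).mp hz3
  have hco : Nat.Coprime r₁ r₂ := hr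
  rcases hd1r with h11 | h12 <;> rcases hd2r with h21 | h22
  · -- d₁ ∣ r₁, d₂ ∣ r₁ : impossible
    exfalso
    have : r₂ ∣ r₁ * r₁ := hr2m.trans (mul_dvd_mul h11 h21)
    have := (Nat.Coprime.mul_right hco.symm hco.symm).eq_one_of_dvd this
    omega
  · -- d₁ ∣ r₁, d₂ ∣ r₂
    left
    constructor
    · have hcop : Nat.Coprime r₁ d₂ := Nat.Coprime.coprime_dvd_right h22 hco
      exact (hcop.dvd_of_dvd_mul_right hr1m).trans hd1p
    · have hcop : Nat.Coprime r₂ d₁ := Nat.Coprime.coprime_dvd_right h11 hco.symm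
      exact (hcop.dvd_of_dvd_mul_left hr2m).trans hd2p
  · -- d₁ ∣ r₂, d₂ ∣ r₁
    right
    constructor
    · have hcop : Nat.Coprime r₁ d₁ := Nat.Coprime.coprime_dvd_right h12 hco
      exact (hcop.dvd_of_dvd_mul_left hr1m).trans hd2p
    · have hcop : Nat.Coprime r₂ d₂ := Nat.Coprime.coprime_dvd_right h21 hco.symm
      exact (hcop.dvd_of_dvd_mul_right hr2m).trans hd1p
  · -- d₁ ∣ r₂, d₂ ∣ r₂ : impossible
    exfalso
    have : r₁ ∣ r₂ * r₂ := hr1m.trans (mul_dvd_mul h12 h22)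
    have := (Nat.Coprime.mul_right hco hco).eq_one_of_dvd this
    omega

end Assembly

end TorusCor

/-- Corollary 3.3: if there is an epimorphism of torus-knot groups
`G(p₁,p₂) → G(r₁,r₂)`, then the crossing number `min {r₁(r₂−1), r₂(r₁−1)}` of the target
torus knot is at most the crossing number `min {p₁(p₂−1), p₂(p₁−1)}` of the source. -/
theorem crossing_number_le_of_torus_knot_epimorphism
    (p₁ p₂ r₁ r₂ : ℕ) (hp₁ : 2 ≤ p₁) (hp₂ : 2 ≤ p₂) (hr₁ : 2 ≤ r₁) (hr₂ : 2 ≤ r₂)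
    (hp : Nat.gcd p₁ p₂ = 1) (hr : Nat.gcd r₁ r₂ = 1)
    (h : ∃ φ : G p₁ p₂ →* G r₁ r₂, Function.Surjective φ) :
    min (r₁ * (r₂ - 1)) (r₂ * (r₁ - 1)) ≤ min (p₁ * (p₂ - 1)) (p₂ * (p₁ - 1)) := by
  obtain ⟨φ, hφ⟩ := h
  rcases TorusCor.key_dvd p₁ p₂ r₁ r₂ hp₁ hp₂ hr₁ hr₂ hp hr φ hφ with ⟨ha, hb⟩ | ⟨ha, hb⟩
  · have h1 : r₁ ≤ p₁ := Nat.le_of_dvd (by omega) ha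
    have h2 : r₂ ≤ p₂ := Nat.le_of_dvd (by omega) hb
    exact min_le_min (Nat.mul_le_mul h1 (by omega)) (Nat.mul_le_mul h2 (by omega))
  · have h1 : r₁ ≤ p₂ := Nat.le_of_dvd (by omega) ha
    have h2 : r₂ ≤ p₁ := Nat.le_of_dvd (by omega) hb
    refine le_min ?_ ?_
    · exact min_le_of_right_le (Nat.mul_le_mul h2 (by omega))
    · exact min_le_of_left_le (Nat.mul_le_mul h1 (by omega))
end

section
/- Let p₁ and p₂ be odd positive integers. If there exists a surjective group homomorphism from the dihedral group D_{p₁} of order 2p₁ onto the dihedral group D_{p₂} of order 2p₂, then p₂ divides p₁. (This is the step in the proof of Proposition 4: an epimorphism of π-orbifold groups D_{p₁} → D_{p₂} forces p₂ ∣ p₁.) -/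
/-- If `p₁, p₂` are odd positive integers and there is a surjective homomorphism
`D_{p₁} → D_{p₂}` of dihedral groups, then `p₂ ∣ p₁`. -/
theorem dihedral_epimorphism_divides
    (p₁ p₂ : ℕ) (hp₁ : 0 < p₁) (hp₂ : 0 < p₂) (ho₁ : Odd p₁) (ho₂ : Odd p₂)
    (φ : DihedralGroup p₁ →* DihedralGroup p₂) (hφ : Function.Surjective φ) :
    p₂ ∣ p₁ := by
  haveI : NeZero p₁ := ⟨hp₁.ne'⟩
  obtain ⟨g, hg⟩ := hφ (DihedralGroup.r 1)
  have h1 : p₂ ∣ orderOf g := by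
    have h := orderOf_map_dvd φ g
    rwa [hg, DihedralGroup.orderOf_r_one] at h
  cases g with
  | r i =>
    refine h1.trans (orderOf_dvd_of_pow_eq_one ?_)
    have : (DihedralGroup.r i : DihedralGroup p₁) = (DihedralGroup.r 1) ^ i.val := by
      simp [DihedralGroup.r_one_pow, ZMod.natCast_val, ZMod.cast_id]
    rw [this, ← pow_mul, mul_comm, pow_mul, DihedralGroup.r_one_pow]
    simp [← DihedralGroup.one_def]
  | sr i =>
    rw [DihedralGroup.orderOf_sr] at h1
    have : p₂ = 1 := by
      rcases (Nat.le_of_dvd (by norm_num) h1) with h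
      interval_cases p₂
      · rfl
      · exact absurd ho₂ (by decide)
    simp [this]
end

section
/- Let p₁, p₂ ≥ 2 and let i, j be integers with i·p₁ + j·p₂ = 1. Then the normal closure of the single element u^j v^i in the torus-knot group G(p₁,p₂) = ⟨u, v ∣ u^{p₁} = v^{p₂}⟩ is the whole group. (This is the claim, used in the proofs of Propositions 3 and Corollary 3.1, that u^j v^i is a meridian of the (p₁,p₂)-torus knot and hence normally generates its group.) -/
/-- If `i p₁ + j p₂ = 1`, then the meridian `u^j v^i` normally generates the torus-knot
group `G(p₁,p₂)`. -/
theorem meridian_normally_generates_torus_knot_group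
    (p₁ p₂ : ℕ) (hp₁ : 2 ≤ p₁) (hp₂ : 2 ≤ p₂) (i j : ℤ)
    (h : i * (p₁ : ℤ) + j * (p₂ : ℤ) = 1) :
    Subgroup.normalClosure
      {(PresentedGroup.of true : G p₁ p₂) ^ j * (PresentedGroup.of false : G p₁ p₂) ^ i} =
      (⊤ : Subgroup (G p₁ p₂)) := by
  set u : G p₁ p₂ := PresentedGroup.of true with hu
  set v : G p₁ p₂ := PresentedGroup.of false with hv
  set N := Subgroup.normalClosure {u ^ j * v ^ i} with hN
  -- the defining relation holds in G
  have hrel : u ^ (p₁ : ℤ) = v ^ (p₂ : ℤ) := by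
    have hmem : FreeGroup.of true ^ p₁ * (FreeGroup.of false ^ p₂)⁻¹ ∈
        Subgroup.normalClosure (torusRel p₁ p₂) :=
      Subgroup.subset_normalClosure rfl
    have h1 : PresentedGroup.mk (torusRel p₁ p₂)
        (FreeGroup.of true ^ p₁ * (FreeGroup.of false ^ p₂)⁻¹) = 1 :=
      (QuotientGroup.eq_one_iff _).2 hmem
    have : u ^ p₁ * (v ^ p₂)⁻¹ = 1 := by
      simpa [hu, hv, PresentedGroup.of] using h1
    have huv : u ^ p₁ = v ^ p₂ := by
      rw [mul_inv_eq_one] at this; exact this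
    push_cast [zpow_natCast]
    exact huv
  -- work in the quotient
  set π : G p₁ p₂ →* (G p₁ p₂ ⧸ N) := QuotientGroup.mk' N with hπ
  set a := π u with ha
  set b := π v with hb
  have hrelQ : a ^ (p₁ : ℤ) = b ^ (p₂ : ℤ) := by
    rw [ha, hb, ← map_zpow, ← map_zpow, hrel]
  have hmQ : a ^ j * b ^ i = 1 := by
    rw [ha, hb, ← map_zpow, ← map_zpow, ← map_mul]
    exact (QuotientGroup.eq_one_iff _).2 (Subgroup.subset_normalClosure rfl)
  have haj : a ^ j = (b ^ i)⁻¹ := eq_inv_of_mul_eq_one_left hmQ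
  have ha1 : a = 1 := by
    have : a = a ^ (i * (p₁ : ℤ) + j * (p₂ : ℤ)) := by rw [h, zpow_one]
    rw [this, zpow_add, mul_comm i, zpow_mul, zpow_mul, hrelQ, haj]
    group
  have hbi : b ^ i = 1 := by
    have : a ^ j = 1 := by rw [ha1, one_zpow]
    rw [this] at hmQ; simpa using hmQ
  have hbp : b ^ (p₂ : ℤ) = 1 := by
    rw [← hrelQ, ha1, one_zpow]
  have hb1 : b = 1 := by
    have : b = b ^ (i * (p₁ : ℤ) + j * (p₂ : ℤ)) := by rw [h, zpow_one]
    rw [this, zpow_add, zpow_mul, mul_comm j, zpow_mul, hbi, hbp]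
    simp
  have hun : u ∈ N := (QuotientGroup.eq_one_iff _).1 ha1
  have hvn : v ∈ N := (QuotientGroup.eq_one_iff _).1 hb1
  refine le_antisymm le_top ?_
  intro x _
  refine PresentedGroup.generated_by _ N ?_ x
  intro c
  cases c
  · exact hvn
  · exact hun
end
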